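/- arXiv:2104.12504 — 7 statements merged into one kernel-verified Lean document; each statement's English description precedes it below -/
import Mathlib

section
/- Let F be a differential field of characteristic zero, I a finite index set, and for each i ∈ I let g_i ∈ F with g_i ≠ 0, 1. Suppose λ_i, μ_i, D_i ∈ F satisfy λ_i' = g_i'/g_i, μ_i' = (1-g_i)'/(1-g_i), and D_i' = -(g_i'/g_i)·μ_i. Suppose r_i ∈ F satisfies r_i = c_i·μ_i + Σ_{l∈I} c_{il}·λ_l + e_i, where c_i, c_{il}, e_i are constants with c_{il} = c_{li} for all i,l. Then for any w ∈ F, the element u := -Σ_{i∈I} c_i·D_i + (1/2)·Σ_{i,l∈I} c_{il}·λ_i·λ_l + Σ_{i∈I} e_i·λ_i + w satisfies u' = Σ_{i∈I} r_i·(g_i'/g_i) + w'. -/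
/-- If each `r i = c i · μ i + Σ_l cc i l · λ l + e i` with constants `c i`,
`cc i l` (symmetric) and `e i`, where `λ i`, `μ i`, `D i` are a logarithm of
`g i`, a logarithm of `1 - g i` and a dilogarithmic integral of `g i`
respectively, then `u := -Σ c i · D i + ½ Σ cc i l · λ i · λ l + Σ e i · λ i + w`
satisfies `u' = Σ r i · (g i)'/(g i) + w'`. -/
theorem stmt1 {F : Type*} [Field F] [CharZero F] (δ : Derivation ℚ F F)
    {I : Type*} [Fintype I]
    (g lam mu D r c e : I → F) (cc : I → I → F) (w : F)
    (hg0 : ∀ i, g i ≠ 0) (hg1 : ∀ i, g i ≠ 1)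
    (hlam : ∀ i, δ (lam i) = δ (g i) / g i)
    (hmu : ∀ i, δ (mu i) = δ (1 - g i) / (1 - g i))
    (hD : ∀ i, δ (D i) = -(δ (g i) / g i) * mu i)
    (hc : ∀ i, δ (c i) = 0) (hcc : ∀ i l, δ (cc i l) = 0) (he : ∀ i, δ (e i) = 0)
    (hsym : ∀ i l, cc i l = cc l i)
    (hr : ∀ i, r i = c i * mu i + (∑ l, cc i l * lam l) + e i) :
    δ (-(∑ i, c i * D i) + (1 / 2 : F) * (∑ i, ∑ l, cc i l * lam i * lam l)
        + (∑ i, e i * lam i) + w)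
      = (∑ i, r i * (δ (g i) / g i)) + δ w := by
  classical
  set L : I → F := fun i => δ (g i) / g i with hL
  have hΛ : ∀ i, δ (lam i) = L i := hlam
  have hD' : ∀ i, δ (D i) = -(L i) * mu i := hD
  have hhalf : δ ((1 / 2 : F)) = 0 := by
    have : ((1 : F) / 2) = algebraMap ℚ F (1 / 2) := by norm_num
    rw [this, Derivation.map_algebraMap]
  have e1 : δ (∑ i, c i * D i) = ∑ i, c i * (-(L i) * mu i) := by
    rw [map_sum]
    refine Finset.sum_congr rfl fun i _ => ?_
    rw [Derivation.leibniz, smul_eq_mul, smul_eq_mul, hc, mul_zero, add_zero, hD']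
  have e2 : δ (∑ i, ∑ l, cc i l * lam i * lam l)
      = ∑ i, ∑ l, (cc i l * lam i * L l + cc i l * lam l * L i) := by
    rw [map_sum]
    refine Finset.sum_congr rfl fun i _ => ?_
    rw [map_sum]
    refine Finset.sum_congr rfl fun l _ => ?_
    rw [Derivation.leibniz, Derivation.leibniz, smul_eq_mul, smul_eq_mul,
      smul_eq_mul, smul_eq_mul, hcc, mul_zero, add_zero, hΛ, hΛ]
    ring
  have e3 : δ (∑ i, e i * lam i) = ∑ i, e i * L i := by
    rw [map_sum]
    refine Finset.sum_congr rfl fun i _ => ?_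
    rw [Derivation.leibniz, smul_eq_mul, smul_eq_mul, he, mul_zero, add_zero, hΛ]
  have hswap : (∑ i, ∑ l, cc i l * lam i * L l) = ∑ i, ∑ l, cc i l * lam l * L i := by
    rw [Finset.sum_comm]
    refine Finset.sum_congr rfl fun i _ => Finset.sum_congr rfl fun l _ => ?_
    rw [hsym i l]
  rw [map_add, map_add, map_add, map_neg, e1, e3, Derivation.leibniz, hhalf,
    smul_eq_mul, smul_eq_mul, mul_zero, add_zero, e2]
  have hrhs : (∑ i, r i * L i)
      = ∑ i, (c i * mu i * L i + (∑ l, cc i l * lam l) * L i + e i * L i) := by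
    refine Finset.sum_congr rfl fun i _ => ?_
    rw [hr i]; ring
  rw [hrhs]
  rw [Finset.sum_add_distrib, Finset.sum_add_distrib]
  have hsplit : (∑ i, ∑ l, (cc i l * lam i * L l + cc i l * lam l * L i))
      = (∑ i, ∑ l, cc i l * lam i * L l) + ∑ i, ∑ l, cc i l * lam l * L i := by
    rw [← Finset.sum_add_distrib]
    exact Finset.sum_congr rfl fun i _ => Finset.sum_add_distrib
  rw [hsplit, hswap]
  have hmul : (∑ i, (∑ l, cc i l * lam l) * L i) = ∑ i, ∑ l, cc i l * lam l * L i := by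
    refine Finset.sum_congr rfl fun i _ => ?_
    rw [Finset.sum_mul]
  rw [hmul]
  have hneg : -(∑ i, c i * (-(L i) * mu i)) = ∑ i, c i * mu i * L i := by
    rw [← Finset.sum_neg_distrib]
    exact Finset.sum_congr rfl fun i _ => by ring
  rw [hneg]
  ring
end

section
/- There is no element w algebraic over the differential field ℂ(x) (with derivation d/dx, x' = 1) such that w' = 1/x. That is, 1/x has no antiderivative in the algebraic closure of ℂ(x). -/
open Polynomial


/-- Key polynomial fact: if `P, Q` are coprime, `Q ≠ 0`, then
`X * (P' Q - P Q') ≠ Q ^ 2`. -/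
lemma key_poly (P Q : ℂ[X]) (hQ : Q ≠ 0) (hco : IsCoprime P Q)
    (h : X * (derivative P * Q - P * derivative Q) = Q ^ 2) : False := by
  have hXQ : X ∣ Q := by
    have : (X : ℂ[X]) ∣ Q ^ 2 := ⟨_, h.symm⟩
    exact (prime_X.dvd_of_dvd_pow this)
  set k := Q.rootMultiplicity 0 with hk
  have hk1 : 1 ≤ k := by
    rw [hk, Polynomial.le_rootMultiplicity_iff hQ]
    simpa [dvd_iff_isRoot] using hXQ
  obtain ⟨m, hm⟩ : ∃ m, k = m + 1 := ⟨k - 1, by omega⟩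
  set S := Q /ₘ (X - C 0) ^ k with hS
  have hQf : (X - C 0) ^ k * S = Q := Polynomial.pow_mul_divByMonic_rootMultiplicity_eq Q 0
  have hS0 : S.eval 0 ≠ 0 := Polynomial.eval_divByMonic_pow_rootMultiplicity_ne_zero 0 hQ
  rw [map_zero, sub_zero] at hQf
  -- substitute Q = X^k * S into h
  have hexp : X ^ (m+1) * (X * derivative P * S - (m+1 : ℂ[X]) * P * S - X * P * derivative S)
      = X ^ (m+1) * (X ^ (m+1) * S ^ 2) := by
    have hd : derivative (X ^ (m+1) * S) = (m+1 : ℂ[X]) * X ^ m * S + X ^ (m+1) * derivative S := by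
      rw [derivative_mul, derivative_X_pow]
      simp only [map_natCast, Nat.add_sub_cancel]
      push_cast
      ring
    rw [← hQf, hm] at h
    rw [hd] at h
    linear_combination h
  have hcan := mul_left_cancel₀ (pow_ne_zero (m+1) X_ne_zero) hexp
  have := congrArg (Polynomial.eval 0) hcan
  simp only [eval_mul, eval_sub, eval_pow, eval_X, eval_add, eval_natCast, eval_ofNat,
    zero_mul, mul_zero, zero_sub, eval_one, zero_pow (Nat.succ_ne_zero m)] at this
  -- this : -(eval of (m+1) * P * S) = 0 roughly
  have hP0 : P.eval 0 = 0 := by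
    have h2 : ((m:ℂ)+1) * P.eval 0 * S.eval 0 = 0 := by
      linear_combination -this
    have hm0 : ((m:ℂ)+1) ≠ 0 := by exact_mod_cast Nat.cast_ne_zero (R := ℂ) |>.mpr (Nat.succ_ne_zero m)
    rcases mul_eq_zero.1 h2 with h3 | h3
    · rcases mul_eq_zero.1 h3 with h4 | h4
      · exact absurd h4 hm0
      · exact h4
    · exact absurd h3 hS0
  have hXP : X ∣ P := by
    rw [Polynomial.X_dvd_iff, ← Polynomial.coeff_zero_eq_eval_zero] at *
    exact hP0
  exact Polynomial.not_isUnit_X (hco.isUnit_of_dvd' hXP hXQ)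


section
variable {E : Type*} [Field E] [CharZero E] (δ : Derivation ℚ E E) (c : ℂ →+* E) (x : E)

lemma psi_deriv (hc : ∀ a : ℂ, δ (c a) = 0) (hx : δ x = 1) (p : ℂ[X]) :
    δ (eval₂ c x p) = eval₂ c x (derivative p) := by
  induction p using Polynomial.induction_on' with
  | add p q hp hq => simp [hp, hq]
  | monomial n a =>
    rw [eval₂_monomial, derivative_monomial, eval₂_monomial]
    rw [Derivation.leibniz, hc, Derivation.leibniz_pow, hx]
    simp only [smul_eq_mul, mul_one, nsmul_eq_mul, smul_zero, add_zero, zero_smul, map_mul,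
      map_natCast, zero_mul]
    ring

lemma psi_ker (hc : ∀ a : ℂ, δ (c a) = 0) (hx : δ x = 1) :
    ∀ p : ℂ[X], eval₂ c x p = 0 → p = 0 := by
  have key : ∀ n (p : ℂ[X]), p.natDegree ≤ n → eval₂ c x p = 0 → p = 0 := by
    intro n
    induction n with
    | zero =>
      intro p hd h0
      have := eq_C_of_natDegree_le_zero hd
      rw [this, eval₂_C] at h0
      rw [this, (map_eq_zero_iff c c.injective).mp h0, map_zero]
    | succ n ih =>
      intro p hd h0
      have h1 : eval₂ c x (derivative p) = 0 := by
        rw [← psi_deriv δ c x hc hx, h0, map_zero]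
      have h2 : (derivative p).natDegree ≤ n := by
        have := Polynomial.natDegree_derivative_le p
        omega
      have h3 := ih _ h2 h1
      have h4 : p.natDegree = 0 := natDegree_eq_zero_of_derivative_eq_zero h3
      have := eq_C_of_natDegree_le_zero h4.le
      rw [this, eval₂_C] at h0
      rw [this, (map_eq_zero_iff c c.injective).mp h0, map_zero]
  exact fun p => key p.natDegree p le_rfl

lemma psi_inj (hc : ∀ a : ℂ, δ (c a) = 0) (hx : δ x = 1) :
    Function.Injective (eval₂RingHom c x) :=
  (injective_iff_map_eq_zero _).mpr (fun p h => psi_ker δ c x hc hx p h)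

lemma no_antideriv (hc : ∀ a : ℂ, δ (c a) = 0) (hx : δ x = 1)
    (P Q : ℂ[X]) (hQ : Q ≠ 0) (hco : IsCoprime P Q)
    (h : δ (eval₂ c x P / eval₂ c x Q) = x⁻¹) : False := by
  have hx0 : x ≠ 0 := fun h0 => by rw [h0, map_zero] at hx; exact one_ne_zero hx.symm
  have hb : eval₂ c x Q ≠ 0 := fun h0 => hQ (psi_ker δ c x hc hx Q h0)
  rw [Derivation.leibniz_div, psi_deriv δ c x hc hx, psi_deriv δ c x hc hx] at h
  simp only [smul_eq_mul] at h
  apply key_poly P Q hQ hco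
  rw [← sub_eq_zero]
  apply psi_ker δ c x hc hx
  have hexp : eval₂ c x (X * (derivative P * Q - P * derivative Q) - Q ^ 2)
      = x * (eval₂ c x Q * eval₂ c x (derivative P) - eval₂ c x P * eval₂ c x (derivative Q))
        - (eval₂ c x Q) ^ 2 := by
    simp only [eval₂_mul, eval₂_sub, eval₂_pow, eval₂_X]
    ring
  rw [hexp]
  field_simp at h
  linear_combination h
end

/-- There is no element `w` algebraic over `ℂ(x)` (inside any differential field
extension `E` of `ℂ(x)`, with `x' = 1` and complex numbers constant) such that
`w' = 1/x`: `1/x` has no antiderivative algebraic over `ℂ(x)`. -/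
theorem stmt4 {E : Type*} [Field E] [CharZero E] (δ : Derivation ℚ E E)
    (c : ℂ →+* E) (x : E) (hc : ∀ a : ℂ, δ (c a) = 0) (hx : δ x = 1) :
    ¬ ∃ w : E,
        IsAlgebraic (↥(Subfield.closure (Set.range ⇑c ∪ {x}))) w ∧ δ w = x⁻¹ := by
  rintro ⟨w, halg, hw⟩
  set K := Subfield.closure (Set.range ⇑c ∪ {x}) with hKdef
  have hxK : x ∈ K := Subfield.subset_closure (Set.mem_union_right _ rfl)
  -- K is closed under δ
  have hδK : ∀ u : E, u ∈ K → δ u ∈ K := by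
    intro u hu
    induction hu using Subfield.closure_induction with
    | mem u hu =>
      rcases hu with ⟨a, rfl⟩ | hu
      · rw [hc]; exact zero_mem K
      · rcases hu with rfl
        rw [hx]; exact one_mem K
    | one => rw [Derivation.map_one_eq_zero]; exact zero_mem K
    | add a b ha hb iha ihb => rw [map_add]; exact add_mem iha ihb
    | neg a ha iha => rw [map_neg]; exact neg_mem iha
    | mul a b ha hb iha ihb =>
      rw [Derivation.leibniz]
      exact add_mem (mul_mem ha ihb) (mul_mem hb iha)
    | inv a ha iha =>
      have h1 : δ a⁻¹ = (a⁻¹)^2 * (a * 0 - 1 * δ a) := by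
        rw [← one_div, Derivation.leibniz_div, Derivation.map_one_eq_zero]
        simp [smul_eq_mul, inv_pow]
      rw [h1]
      exact mul_mem (pow_mem (inv_mem ha) 2)
        (sub_mem (mul_mem ha (zero_mem K)) (mul_mem (one_mem K) iha))
  -- minimal polynomial setup
  have hint : IsIntegral (↥K) w := halg.isIntegral
  set p := minpoly (↥K) w with hpdef
  have hpm : p.Monic := minpoly.monic hint
  set n := p.natDegree with hndef
  have hn : 0 < n := minpoly.natDegree_pos hint
  set A : ℕ → ↥K := fun i => p.coeff i with hAdef
  have hcoe : ∀ u : ↥K, algebraMap (↥K) E u = (u : E) := fun u => rfl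
  -- the vanishing sum
  have h0 : ∑ i ∈ Finset.range (n+1), ((A i : E)) * w ^ i = 0 := by
    have h1 := minpoly.aeval (↥K) w
    rw [Polynomial.aeval_eq_sum_range] at h1
    simpa [Algebra.smul_def, hcoe] using h1
  -- differentiate the sum
  have hterm : ∀ i, δ ((A i : E) * w ^ i)
      = δ ((A i : E)) * w ^ i + (i : E) * (A i : E) * w ^ (i-1) * x⁻¹ := by
    intro i
    rw [Derivation.leibniz, Derivation.leibniz_pow, hw]
    simp only [smul_eq_mul, nsmul_eq_mul]
    ring
  have hsum2 : ∑ i ∈ Finset.range (n+1), δ ((A i : E)) * w ^ i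
      + (∑ i ∈ Finset.range (n+1), (i : E) * (A i : E) * w ^ (i-1)) * x⁻¹ = 0 := by
    have h2 := congrArg δ h0
    rw [map_sum, map_zero] at h2
    simp_rw [hterm] at h2
    rw [Finset.sum_add_distrib, ← Finset.sum_mul] at h2
    exact h2
  -- the derivative of p evaluated at w
  have hder : (aeval w (derivative p) : E)
      = ∑ i ∈ Finset.range (n+1), (i : E) * (A i : E) * w ^ (i-1) := by
    conv_lhs => rw [p.as_sum_range' (n+1) (by omega)]
    rw [derivative_sum, map_sum]
    apply Finset.sum_congr rfl
    intro i _
    rw [derivative_monomial, aeval_monomial, map_mul, map_natCast, hcoe]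
    simp only [hAdef]
    ring
  -- the companion polynomial R
  set dK : ↥K → ↥K := fun u => ⟨δ u, hδK u u.2⟩ with hdKdef
  have hdK : ∀ u, ((dK u : ↥K) : E) = δ (u : E) := fun u => rfl
  set t : ↥K := ⟨x⁻¹, inv_mem hxK⟩ with htdef
  set R : Polynomial (↥K) := (∑ i ∈ Finset.range n, C (dK (A i)) * X ^ i) + C t * derivative p
    with hRdef
  have hAn : A n = 1 := hpm.coeff_natDegree
  have ht : (t : E) = x⁻¹ := rfl
  have hp0 : p ≠ 0 := minpoly.ne_zero hint
  have haR : aeval w R = 0 := by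
    have e1 : aeval w R = (∑ i ∈ Finset.range n, δ ((A i : E)) * w ^ i)
        + x⁻¹ * (aeval w (derivative p)) := by
      rw [hRdef, map_add, map_sum, map_mul, aeval_C, hcoe, ht]
      congr 1
      apply Finset.sum_congr rfl
      intro i _
      rw [map_mul, aeval_C, map_pow, aeval_X, hcoe, hdK]
    rw [e1, hder]
    have hlast : ∑ i ∈ Finset.range (n+1), δ ((A i : E)) * w ^ i
        = ∑ i ∈ Finset.range n, δ ((A i : E)) * w ^ i := by
      rw [Finset.sum_range_succ, hAn]
      simp
    rw [← hlast]
    linear_combination hsum2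
  have hdeg : R.degree < p.degree := by
    rw [hRdef]
    apply lt_of_le_of_lt (degree_add_le _ _)
    rw [max_lt_iff]
    constructor
    · apply lt_of_le_of_lt (degree_sum_le _ _)
      rw [Finset.sup_lt_iff (by rw [degree_eq_natDegree hp0]; exact WithBot.bot_lt_coe _)]
      intro i hi
      apply lt_of_le_of_lt (degree_C_mul_X_pow_le _ _)
      rw [degree_eq_natDegree hp0]
      exact_mod_cast Finset.mem_range.mp hi
    · apply lt_of_le_of_lt (degree_mul_le _ _)
      have h3 := degree_derivative_lt hp0
      have h4 : degree (C t) ≤ 0 := degree_C_le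
      calc degree (C t) + degree (derivative p) ≤ 0 + degree (derivative p) := by
            exact add_le_add_left h4 _
        _ = degree (derivative p) := by rw [zero_add]
        _ < degree p := h3
  have hR0 : R = 0 := by
    by_contra hR
    exact absurd (minpoly.degree_le_of_ne_zero (↥K) w hR haR) (not_le.mpr hdeg)
  -- extract coefficient n-1
  have hcoeff : dK (A (n-1)) + t * ((n : ↥K)) = 0 := by
    have h5 := congrArg (fun q => Polynomial.coeff q (n-1)) hR0
    simp only [hRdef, coeff_add, finset_sum_coeff, coeff_C_mul, coeff_X_pow, coeff_zero,
      mul_ite, mul_one, mul_zero, Finset.sum_ite_eq, Finset.mem_range] at h5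
    rw [if_pos (by omega : n - 1 < n), coeff_derivative] at h5
    have h6 : n - 1 + 1 = n := by omega
    rw [h6] at h5
    have h8 : p.coeff n = 1 := hAn
    rw [h8] at h5
    rw [one_mul] at h5
    have h7 : ((n-1 : ℕ) : ↥K) + 1 = (n : ↥K) := by exact_mod_cast congrArg (Nat.cast (R := ↥K)) h6
    rw [h7] at h5
    exact h5
  -- conclusion: an element of K with derivative -(n) * x⁻¹
  have hnE : ((n : E)) ≠ 0 := Nat.cast_ne_zero.mpr hn.ne'
  have h10 : (((n : ↥K)) : E) = (n : E) := by push_cast; rfl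
  have hder2 : δ ((A (n-1) : E)) = -((n : E)) * x⁻¹ := by
    have h9 : ((dK (A (n-1)) : E)) + (t : E) * ((n : ↥K) : E) = 0 := by
      exact_mod_cast congrArg (fun u : ↥K => (u : E)) hcoeff
    rw [hdK, ht, h10] at h9
    linear_combination h9
  set v : E := (A (n-1) : E) / (-(n : E)) with hvdef
  have hδv : δ v = x⁻¹ := by
    rw [hvdef, Derivation.leibniz_div_const _ _ _ (by rw [map_neg, Derivation.map_natCast, neg_zero]),
      smul_eq_mul, hder2]
    field_simp
  have hvK : v ∈ K := by
    apply div_mem ((A (n-1)).2)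
    apply neg_mem
    exact h10 ▸ (n : ↥K).2
  -- K is contained in the range of the RatFunc evaluation
  have hφcond : nonZeroDivisors (Polynomial ℂ) ≤ Submonoid.comap (eval₂RingHom c x) (nonZeroDivisors E) := by
    intro q hq
    simp only [Submonoid.mem_comap]
    rw [mem_nonZeroDivisors_iff_ne_zero] at hq ⊢
    exact fun h => hq (psi_ker δ c x hc hx q h)
  set φ := RatFunc.liftRingHom (eval₂RingHom c x) hφcond with hφdef
  have hφ_alg : ∀ q : ℂ[X], φ (algebraMap ℂ[X] (RatFunc ℂ) q) = eval₂ c x q := by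
    intro q
    have h11 := RatFunc.liftRingHom_apply_div (eval₂RingHom c x) hφcond q 1
    simp only [map_one, div_one] at h11
    exact h11
  have hKrange : K ≤ φ.fieldRange := by
    rw [hKdef]
    apply Subfield.closure_le.mpr
    rintro u (⟨a, rfl⟩ | hu)
    · exact ⟨algebraMap ℂ[X] (RatFunc ℂ) (Polynomial.C a), by rw [hφ_alg, eval₂_C]⟩
    · rcases hu with rfl
      exact ⟨algebraMap ℂ[X] (RatFunc ℂ) Polynomial.X, by rw [hφ_alg, eval₂_X]⟩
  obtain ⟨r, hr⟩ := hKrange hvK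
  have hrep : eval₂ c x r.num / eval₂ c x r.denom = v := by
    have h12 := congrArg φ (RatFunc.num_div_denom r)
    rw [map_div₀, hφ_alg, hφ_alg] at h12
    rw [h12, hr]
  exact no_antideriv δ c x hc hx r.num r.denom (RatFunc.denom_ne_zero r)
    (RatFunc.isCoprime_num_denom r) (by rw [hrep, hδv])
end

section
/- Let F = ℂ(x, θ) be a differential field where x' = 1, θ is transcendental over ℂ(x), and θ' = θ (so θ plays the role of e^x), with field of constants ℂ. Then there is no element z ∈ F with z' = (1-θ)'/(1-θ) = -θ/(1-θ). That is, the logarithmic derivative of 1 - e^x has no antiderivative in ℂ(x, e^x). -/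
open Polynomial

set_option maxHeartbeats 6000000 in
/-- In the differential field `F = ℂ(x, θ)` with `x' = 1`, `θ' = θ` (so `θ`
plays the role of `e^x`) and field of constants `ℂ`, there is no `z ∈ F` with
`z' = (1-θ)'/(1-θ)`: the logarithmic derivative of `1 - e^x` has no
antiderivative in `ℂ(x, e^x)`. -/
theorem stmt5 {F : Type*} [Field F] [CharZero F] (δ : Derivation ℚ F F)
    (c : ℂ →+* F) (x θ : F)
    (hc : ∀ a : ℂ, δ (c a) = 0) (hx : δ x = 1) (hθ : δ θ = θ)
    (hxtr : Transcendental (↥(Subfield.closure (Set.range ⇑c))) x)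
    (hθtr : Transcendental (↥(Subfield.closure (Set.range ⇑c ∪ {x}))) θ)
    (hgen : Subfield.closure (Set.range ⇑c ∪ {x, θ}) = ⊤)
    (hconst : ∀ a : F, δ a = 0 → ∃ z : ℂ, a = c z) :
    ¬ ∃ z : F, δ z = δ (1 - θ) / (1 - θ) := by
  rintro ⟨z, hz⟩
  set K := Subfield.closure (Set.range ⇑c ∪ {x}) with hKdef
  have hxK : x ∈ K := Subfield.subset_closure (Or.inr rfl)
  have hcK : ∀ a : ℂ, c a ∈ K := fun a => Subfield.subset_closure (Or.inl ⟨a, rfl⟩)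
  -- `δ` maps `K` into `K`.
  have hδK : ∀ a : F, a ∈ K → δ a ∈ K := by
    intro a ha
    induction ha using Subfield.closure_induction with
    | mem b hb =>
      rcases hb with ⟨w, rfl⟩ | rfl
      · rw [hc]; exact K.zero_mem
      · rw [hx]; exact K.one_mem
    | one => rw [Derivation.map_one_eq_zero]; exact K.zero_mem
    | add a b ha hb iha ihb => rw [map_add]; exact K.add_mem iha ihb
    | neg a ha iha => rw [map_neg]; exact K.neg_mem iha
    | inv a ha iha =>
      rw [Derivation.leibniz_inv, smul_eq_mul]
      exact K.mul_mem (K.neg_mem (K.pow_mem (K.inv_mem ha) 2)) iha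
    | mul a b ha hb iha ihb =>
      rw [Derivation.leibniz, smul_eq_mul, smul_eq_mul]
      exact K.add_mem (K.mul_mem ha ihb) (K.mul_mem hb iha)
  -- `aeval θ` is injective on `K[X]`.
  have hne : ∀ p : Polynomial K, p ≠ 0 → aeval θ p ≠ 0 := fun p hp h => hθtr ⟨p, hp, h⟩
  have hinj : Function.Injective (aeval θ : Polynomial K → F) := by
    intro p q h
    by_contra hpq
    exact hne (p - q) (sub_ne_zero.mpr hpq) (by rw [map_sub, h, sub_self])
  have hC : ∀ k : K, aeval θ (C k) = (k : F) := fun k => by rw [aeval_C]; rfl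
  -- derivatives of polynomial expressions in θ are polynomial expressions in θ
  have hpowθ : ∀ n : ℕ, δ (θ ^ n) = n • θ ^ n := by
    intro n
    cases n with
    | zero => simp
    | succ m =>
      rw [Derivation.leibniz_pow, hθ, Nat.succ_sub_one, smul_eq_mul, ← pow_succ]
  have hder : ∀ P : Polynomial K, ∃ R : Polynomial K, δ (aeval θ P) = aeval θ R := by
    intro P
    induction P using Polynomial.induction_on' with
    | add p q hp hq =>
      obtain ⟨R1, h1⟩ := hp
      obtain ⟨R2, h2⟩ := hq
      exact ⟨R1 + R2, by rw [map_add, map_add, h1, h2, map_add]⟩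
    | monomial n a =>
      refine ⟨monomial n ⟨δ (a : F), hδK _ a.2⟩ + n • monomial n a, ?_⟩
      rw [aeval_monomial, map_add, map_nsmul, aeval_monomial, aeval_monomial]
      rw [Derivation.leibniz, smul_eq_mul, smul_eq_mul, hpowθ]
      have h1 : (algebraMap K F) a = (a : F) := rfl
      have h2 : (algebraMap K F) (⟨δ (a : F), hδK _ a.2⟩ : K) = δ (a : F) := rfl
      rw [h1, h2]
      simp only [nsmul_eq_mul]
      ring
  -- every element of `F` is a ratio of polynomial expressions in `θ` over `K`
  let S : Subfield F :=
    { carrier := {w | ∃ P Q : Polynomial K, Q ≠ 0 ∧ w * aeval θ Q = aeval θ P}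
      zero_mem' := ⟨0, 1, one_ne_zero, by simp⟩
      one_mem' := ⟨1, 1, one_ne_zero, by simp⟩
      add_mem' := by
        rintro w v ⟨P1, Q1, h1, e1⟩ ⟨P2, Q2, h2, e2⟩
        exact ⟨P1 * Q2 + P2 * Q1, Q1 * Q2, mul_ne_zero h1 h2, by
          rw [map_mul, map_add, map_mul, map_mul, ← e1, ← e2]; ring⟩
      neg_mem' := by
        rintro w ⟨P1, Q1, h1, e1⟩
        exact ⟨-P1, Q1, h1, by rw [map_neg, ← e1]; ring⟩
      mul_mem' := by
        rintro w v ⟨P1, Q1, h1, e1⟩ ⟨P2, Q2, h2, e2⟩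
        exact ⟨P1 * P2, Q1 * Q2, mul_ne_zero h1 h2, by
          rw [map_mul, map_mul, ← e1, ← e2]; ring⟩
      inv_mem' := by
        rintro w ⟨P1, Q1, h1, e1⟩
        rcases eq_or_ne w 0 with rfl | hw
        · exact ⟨0, 1, one_ne_zero, by simp⟩
        · have hP : aeval θ P1 ≠ 0 := by
            rw [← e1]
            exact mul_ne_zero hw (hne Q1 h1)
          have hP1 : P1 ≠ 0 := fun h => hP (by rw [h, map_zero])
          exact ⟨Q1, P1, hP1, by
            rw [← e1, ← mul_assoc, inv_mul_cancel₀ hw, one_mul]⟩ }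
  have hS : ∀ w : F, w ∈ S := by
    intro w
    have hle : Subfield.closure (Set.range ⇑c ∪ {x, θ}) ≤ S := by
      apply Subfield.closure_le.mpr
      intro b hb
      simp only [Set.mem_union, Set.mem_range, Set.mem_insert_iff,
        Set.mem_singleton_iff] at hb
      rcases hb with ⟨a, rfl⟩ | hb | hb
      · exact ⟨C ⟨c a, hcK a⟩, 1, one_ne_zero, by rw [map_one, mul_one, hC]⟩
      · rw [hb]
        exact ⟨C ⟨x, hxK⟩, 1, one_ne_zero, by rw [map_one, mul_one, hC]⟩
      · rw [hb]
        exact ⟨X, 1, one_ne_zero, by rw [map_one, mul_one, aeval_X]⟩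
    rw [hgen] at hle
    exact hle trivial
  -- basic facts about `u = θ - 1`
  set u : F := θ - 1 with hudef
  have hu : u ≠ 0 := by
    intro h
    have : aeval θ (X - C (1 : K)) = 0 := by
      rw [map_sub, aeval_X, hC]
      exact_mod_cast h
    exact hne (X - C 1) (X_sub_C_ne_zero 1) this
  have hθ0 : θ ≠ 0 := fun h => hne X X_ne_zero (by rw [aeval_X]; exact h)
  have h1θ : (1 : F) - θ ≠ 0 := fun h => hu (by rw [hudef, ← sub_eq_zero.mp h, sub_self])
  have hzu : δ z * u = θ := by
    have hd : δ (1 - θ) = -θ := by rw [Derivation.map_sub, Derivation.map_one_eq_zero, hθ]; ring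
    rw [hz, hd, hudef, div_mul_eq_mul_div, div_eq_iff h1θ]
    ring
  have hδu : δ u = θ := by rw [hudef, Derivation.map_sub, hθ, Derivation.map_one_eq_zero, sub_zero]
  have hupow : ∀ k : ℕ, δ (u ^ k) * u = (k : F) * (u ^ k * θ) := by
    intro k
    cases k with
    | zero => simp
    | succ m =>
      rw [Derivation.leibniz_pow, hδu, Nat.succ_sub_one]
      simp only [smul_eq_mul, nsmul_eq_mul]
      push_cast
      ring
  -- z ≠ 0
  have hz0 : z ≠ 0 := by
    intro h
    rw [h, map_zero, zero_mul] at hzu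
    exact hθ0 hzu.symm
  -- obtain the representation of z
  obtain ⟨P0, Q0, hQ0, e0⟩ := hS z
  have hP0 : P0 ≠ 0 := by
    intro h
    rw [h, map_zero] at e0
    exact (mul_ne_zero hz0 (hne Q0 hQ0)) e0
  obtain ⟨P1, hPfac, hPnd⟩ := P0.exists_eq_pow_rootMultiplicity_mul_and_not_dvd hP0 1
  obtain ⟨Q1, hQfac, hQnd⟩ := Q0.exists_eq_pow_rootMultiplicity_mul_and_not_dvd hQ0 1
  set a : ℕ := P0.rootMultiplicity 1 with hadef
  set b : ℕ := Q0.rootMultiplicity 1 with hbdef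
  have hP1 : P1.eval 1 ≠ 0 := fun h => hPnd (dvd_iff_isRoot.mpr h)
  have hQ1 : Q1.eval 1 ≠ 0 := fun h => hQnd (dvd_iff_isRoot.mpr h)
  have haevalu : aeval θ (X - C (1 : K)) = u := by
    rw [map_sub, aeval_X, hC]; push_cast; rfl
  set A : F := aeval θ P1 with hAdef
  set B : F := aeval θ Q1 with hBdef
  -- the key equation : z * (u^b * B) = u^a * A
  have E0 : z * (u ^ b * B) = u ^ a * A := by
    have h1 : aeval θ P0 = u ^ a * A := by
      rw [hPfac, map_mul, map_pow, haevalu]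
    have h2 : aeval θ Q0 = u ^ b * B := by
      rw [hQfac, map_mul, map_pow, haevalu]
    rw [← h1, ← h2]; exact e0
  -- reduce so that min of exponents is zero
  set m : ℕ := min a b with hmdef
  set a' : ℕ := a - m with ha'def
  set b' : ℕ := b - m with hb'def
  have hab : a' = 0 ∨ b' = 0 := by omega
  have E : z * (u ^ b' * B) = u ^ a' * A := by
    have ham : a = a' + m := by omega
    have hbm : b = b' + m := by omega
    have := E0
    rw [ham, hbm, pow_add, pow_add] at this
    have h1 : (z * (u ^ b' * B)) * u ^ m = (u ^ a' * A) * u ^ m := by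
      linear_combination this
    exact mul_right_cancel₀ (pow_ne_zero m hu) h1
  -- derivatives of A and B are polynomial expressions
  obtain ⟨Pt, hPt⟩ := hder P1
  obtain ⟨Qt, hQt⟩ := hder Q1
  -- differentiate E
  have dE : δ z * (u ^ b' * B) + z * (δ (u ^ b') * B + u ^ b' * δ B)
      = δ (u ^ a') * A + u ^ a' * δ A := by
    have h := congrArg (⇑δ) E
    rw [Derivation.leibniz, Derivation.leibniz, Derivation.leibniz] at h
    simp only [smul_eq_mul] at h
    linear_combination h
  have hbu := hupow b'
  have hau := hupow a'
  -- the key identity in F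
  have key : θ * u ^ b' * B ^ 2 + (b' : F) * (θ * u ^ a' * A * B) + u ^ (a' + 1) * A * δ B
      = (a' : F) * (θ * u ^ a' * A * B) + u ^ (a' + 1) * Pt.aeval θ * B := by
    rw [← hPt]
    linear_combination (u * B) * dE - (u ^ b' * B ^ 2) * hzu - (z * B ^ 2) * hbu
      - ((b' : F) * θ * B + u * δ B) * E + (A * B) * hau
  rw [hQt] at key
  -- convert to a polynomial identity
  have poly_eq : (X * (X - C (1 : K)) ^ b' * Q1 ^ 2
        + (b' : Polynomial K) * (X * (X - C 1) ^ a' * P1 * Q1)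
        + (X - C 1) ^ (a' + 1) * P1 * Qt)
      = ((a' : Polynomial K) * (X * (X - C 1) ^ a' * P1 * Q1)
        + (X - C 1) ^ (a' + 1) * Pt * Q1) := by
    apply hinj
    simp only [map_add, map_mul, map_pow, map_natCast, aeval_X, haevalu]
    linear_combination key
  -- evaluate at 1
  have ev := congrArg (Polynomial.eval (1 : K)) poly_eq
  simp only [eval_add, eval_mul, eval_pow, eval_X, eval_C, eval_natCast, eval_sub,
    eval_one, sub_self] at ev
  have h0succ : (0 : K) ^ (a' + 1) = 0 := zero_pow (Nat.succ_ne_zero a')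
  rw [h0succ] at ev
  have hKchar : ∀ n : ℕ, n ≠ 0 → (n : K) ≠ 0 := by
    intro n hn h
    have h2 := congrArg (⇑K.subtype) h
    rw [map_natCast, map_zero] at h2
    exact (Nat.cast_ne_zero.mpr hn) h2
  rcases Nat.eq_zero_or_pos a' with ha0 | hapos
  · rcases Nat.eq_zero_or_pos b' with hb0 | hbpos
    · -- a' = 0, b' = 0
      rw [ha0, hb0] at ev
      simp only [pow_zero, Nat.cast_zero] at ev
      have evq : Q1.eval 1 ^ 2 = 0 := by linear_combination ev
      exact hQ1 (by simpa using sq_eq_zero_iff.mp evq)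
    · -- a' = 0, b' ≥ 1
      rw [ha0, zero_pow (by omega : b' ≠ 0)] at ev
      simp only [pow_zero, Nat.cast_zero] at ev
      have evq : (b' : K) * (P1.eval 1 * Q1.eval 1) = 0 := by linear_combination ev
      rcases mul_eq_zero.mp evq with h | h
      · exact hKchar b' (by omega) h
      · rcases mul_eq_zero.mp h with h | h
        · exact hP1 h
        · exact hQ1 h
  · -- a' ≥ 1, hence b' = 0
    have hb0 : b' = 0 := by omega
    rw [hb0, zero_pow (by omega : a' ≠ 0)] at ev
    simp only [pow_zero, Nat.cast_zero] at ev
    have evq : Q1.eval 1 ^ 2 = 0 := by linear_combination ev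
    exact hQ1 (by simpa using sq_eq_zero_iff.mp evq)
end

section
/- Let F be a differential field of characteristic zero, t ≥ 1, and α₁, …, α_t distinct elements of an extension field. Let η, ξ be nonzero elements, a₁,…,a_t and b₁,…,b_t integers, and suppose f = η·∏_{j=1}^t (θ-α_j)^{a_j} and 1 - f = ξ·∏_{j=1}^t (θ-α_j)^{b_j} in a differential field F(θ) where there exist indices m ≤ n ≤ t such that: a_j > 0 and b_j = 0 for 1 ≤ j ≤ m; a_j = b_j < 0 for m+1 ≤ j ≤ n; a_j = 0 and b_j > 0 for n+1 ≤ j ≤ t. Then for any elements v₁,…,v_t of any differential field extension containing all α_j, η, ξ: Σ_{j≠k} (a_k·b_j - a_j·b_k)·((α_j' - α_k')/(α_j - α_k))·v_k = Σ_{k=1}^t (b_k·(η'/η) - a_k·(ξ'/ξ))·v_k. -/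
open Finset Polynomial

private lemma ld_mul {E : Type*} [Field E] [CharZero E] (δ : Derivation ℚ E E) {x y : E}
    (hx : x ≠ 0) (hy : y ≠ 0) : δ (x * y) / (x * y) = δ x / x + δ y / y := by
  rw [Derivation.leibniz, smul_eq_mul, smul_eq_mul]
  field_simp
  ring

private lemma ld_pow {E : Type*} [Field E] [CharZero E] (δ : Derivation ℚ E E) {x : E}
    (hx : x ≠ 0) (e : ℕ) : δ (x ^ e) / x ^ e = (e : E) * (δ x / x) := by
  induction e with
  | zero => simp
  | succ n ih =>
    rw [pow_succ, ld_mul δ (pow_ne_zero n hx) hx, ih]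
    push_cast; ring

private lemma ld_prod {E : Type*} [Field E] [CharZero E] (δ : Derivation ℚ E E)
    {ι : Type*} [DecidableEq ι] (s : Finset ι) (x : ι → E) (e : ι → ℕ)
    (hx : ∀ j ∈ s, x j ≠ 0) :
    δ (∏ j ∈ s, x j ^ e j) / (∏ j ∈ s, x j ^ e j)
      = ∑ j ∈ s, (e j : E) * (δ (x j) / x j) := by
  induction s using Finset.induction_on with
  | empty => simp
  | @insert c s' hc ih =>
    have hxc : x c ≠ 0 := hx c (Finset.mem_insert_self _ _)
    have hxs : ∀ j ∈ s', x j ≠ 0 := fun j hj => hx j (Finset.mem_insert_of_mem hj)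
    have hpne : (∏ j ∈ s', x j ^ e j) ≠ 0 :=
      Finset.prod_ne_zero_iff.mpr fun j hj => pow_ne_zero _ (hxs j hj)
    rw [Finset.prod_insert hc, Finset.sum_insert hc,
      ld_mul δ (pow_ne_zero _ hxc) hpne, ld_pow δ hxc, ih hxs]

/-- Proposition 4.1(i): with `f = η·∏(θ-α_j)^{a_j}` and
`1 - f = ξ·∏(θ-α_j)^{b_j}` (with the sign pattern coming from
`f = ηP/Q`, `1-f = ξR/Q`), for any `v₁,…,v_t`:
`Σ_{j≠k} (a_k b_j - a_j b_k)·((α_j'-α_k')/(α_j-α_k))·v_k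
  = Σ_k (b_k·η'/η - a_k·ξ'/ξ)·v_k`. -/
theorem stmt7 {E : Type*} [Field E] [CharZero E] (δ : Derivation ℚ E E)
    (F : Subfield E) (hFδ : ∀ y ∈ F, δ y ∈ F)
    (θ : E) (hθ : Transcendental (↥F) θ)
    {t : ℕ} (ht : 1 ≤ t) (α : Fin t → E) (hαF : ∀ j, α j ∈ F)
    (hinj : Function.Injective α)
    (η ξ : E) (hη : η ∈ F) (hξ : ξ ∈ F) (hη0 : η ≠ 0) (hξ0 : ξ ≠ 0)
    (a b : Fin t → ℤ) (m n : ℕ) (hmn : m ≤ n) (hnt : n ≤ t)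
    (h1 : ∀ j : Fin t, (j : ℕ) < m → 0 < a j ∧ b j = 0)
    (h2 : ∀ j : Fin t, m ≤ (j : ℕ) → (j : ℕ) < n → a j < 0 ∧ a j = b j)
    (h3 : ∀ j : Fin t, n ≤ (j : ℕ) → a j = 0 ∧ 0 < b j)
    (hf : (1 : E) - η * ∏ j, (θ - α j) ^ a j = ξ * ∏ j, (θ - α j) ^ b j)
    (v : Fin t → E) :
    ∑ k, (∑ j ∈ Finset.univ.erase k,
        ((a k * b j - a j * b k : ℤ) : E) * ((δ (α j) - δ (α k)) / (α j - α k))) * v k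
      = ∑ k, ((b k : E) * (δ η / η) - (a k : E) * (δ ξ / ξ)) * v k := by
  classical
  have hne : ∀ j, θ - α j ≠ 0 := by
    intro j h
    rw [sub_eq_zero] at h
    exact hθ (h ▸ isAlgebraic_algebraMap (⟨α j, hαF j⟩ : F))
  have hba : ∀ j, b j + (((-(a j)).toNat : ℤ)) = ((b j).toNat : ℤ) := by
    intro j
    rcases lt_or_ge (j : ℕ) m with h | h
    · obtain ⟨h', h''⟩ := h1 j h; omega
    rcases lt_or_ge (j : ℕ) n with h' | h'
    · obtain ⟨h'', h'''⟩ := h2 j h h'; omega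
    · obtain ⟨h'', h'''⟩ := h3 j h'; omega
  set A : Fin t → ↥F := fun j => ⟨α j, hαF j⟩ with hA
  have haev : ∀ (x : E) (e : Fin t → ℕ),
      aeval x (∏ j, (X - C (A j)) ^ e j : Polynomial ↥F) = ∏ j, (x - α j) ^ e j := by
    intro x e
    rw [map_prod]
    exact Finset.prod_congr rfl fun j _ => by rw [map_pow, map_sub, aeval_X, aeval_C]; rfl
  have hpoly : (∏ j, (X - C (A j)) ^ (-(a j)).toNat : Polynomial ↥F)
      = C (⟨η, hη⟩ : ↥F) * ∏ j, (X - C (A j)) ^ (a j).toNat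
        + C (⟨ξ, hξ⟩ : ↥F) * ∏ j, (X - C (A j)) ^ (b j).toNat := by
    have h0 : aeval θ ((∏ j, (X - C (A j)) ^ (-(a j)).toNat : Polynomial ↥F)
        - (C (⟨η, hη⟩ : ↥F) * ∏ j, (X - C (A j)) ^ (a j).toNat
          + C (⟨ξ, hξ⟩ : ↥F) * ∏ j, (X - C (A j)) ^ (b j).toNat)) = 0 := by
      rw [map_sub, map_add, map_mul, map_mul, aeval_C, aeval_C, haev, haev, haev]
      show (∏ j, (θ - α j) ^ (-(a j)).toNat)
        - (η * ∏ j, (θ - α j) ^ (a j).toNat + ξ * ∏ j, (θ - α j) ^ (b j).toNat) = 0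
      have hPa : (∏ j, (θ - α j) ^ a j) * (∏ j, (θ - α j) ^ (-(a j)).toNat)
          = ∏ j, (θ - α j) ^ (a j).toNat := by
        rw [← Finset.prod_mul_distrib]
        refine Finset.prod_congr rfl fun j _ => ?_
        rw [← zpow_natCast (θ - α j) ((-(a j)).toNat), ← zpow_natCast (θ - α j) (a j).toNat,
          ← zpow_add₀ (hne j)]
        congr 1; omega
      have hPb : (∏ j, (θ - α j) ^ b j) * (∏ j, (θ - α j) ^ (-(a j)).toNat)
          = ∏ j, (θ - α j) ^ (b j).toNat := by
        rw [← Finset.prod_mul_distrib]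
        refine Finset.prod_congr rfl fun j _ => ?_
        rw [← zpow_natCast (θ - α j) ((-(a j)).toNat), ← zpow_natCast (θ - α j) (b j).toNat,
          ← zpow_add₀ (hne j)]
        congr 1; exact hba j
      rw [← hPa, ← hPb]
      linear_combination (∏ j, (θ - α j) ^ (-(a j)).toNat) * hf
    by_contra hS
    rw [← sub_eq_zero] at hS
    exact hθ ⟨_, hS, h0⟩
  have hkey : ∀ x : E, ∏ j, (x - α j) ^ (-(a j)).toNat
      = η * ∏ j, (x - α j) ^ (a j).toNat + ξ * ∏ j, (x - α j) ^ (b j).toNat := by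
    intro x
    have hx := congrArg (aeval x) hpoly
    rw [map_add, map_mul, map_mul, aeval_C, aeval_C, haev, haev, haev] at hx
    exact hx
  refine Finset.sum_congr rfl fun k _ => ?_
  congr 1
  -- per-k coefficient identity
  have hxk : ∀ j ∈ Finset.univ.erase k, α k - α j ≠ 0 := fun j hj =>
    sub_ne_zero.mpr fun h => (Finset.mem_erase.mp hj).1 (hinj h.symm)
  have hD : ∀ j, (δ (α j) - δ (α k)) / (α j - α k) = δ (α k - α j) / (α k - α j) := by
    intro j
    rw [map_sub, ← neg_div_neg_eq, neg_sub, neg_sub]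
  have hPne : (∏ j ∈ Finset.univ.erase k, (α k - α j) ^ (a j).toNat) ≠ 0 :=
    Finset.prod_ne_zero_iff.mpr fun j hj => pow_ne_zero _ (hxk j hj)
  have hQne : (∏ j ∈ Finset.univ.erase k, (α k - α j) ^ (-(a j)).toNat) ≠ 0 :=
    Finset.prod_ne_zero_iff.mpr fun j hj => pow_ne_zero _ (hxk j hj)
  have hRne : (∏ j ∈ Finset.univ.erase k, (α k - α j) ^ (b j).toNat) ≠ 0 :=
    Finset.prod_ne_zero_iff.mpr fun j hj => pow_ne_zero _ (hxk j hj)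
  have hldP : δ (∏ j ∈ Finset.univ.erase k, (α k - α j) ^ (a j).toNat)
        / (∏ j ∈ Finset.univ.erase k, (α k - α j) ^ (a j).toNat)
      = ∑ j ∈ Finset.univ.erase k, (((a j).toNat : ℕ) : E) * (δ (α k - α j) / (α k - α j)) :=
    ld_prod δ _ _ _ hxk
  have hldQ : δ (∏ j ∈ Finset.univ.erase k, (α k - α j) ^ (-(a j)).toNat)
        / (∏ j ∈ Finset.univ.erase k, (α k - α j) ^ (-(a j)).toNat)
      = ∑ j ∈ Finset.univ.erase k, ((((-(a j)).toNat : ℕ)) : E) * (δ (α k - α j) / (α k - α j)) :=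
    ld_prod δ _ _ _ hxk
  have hldR : δ (∏ j ∈ Finset.univ.erase k, (α k - α j) ^ (b j).toNat)
        / (∏ j ∈ Finset.univ.erase k, (α k - α j) ^ (b j).toNat)
      = ∑ j ∈ Finset.univ.erase k, (((b j).toNat : ℕ) : E) * (δ (α k - α j) / (α k - α j)) :=
    ld_prod δ _ _ _ hxk
  have hcastb : ∀ j, (b j : E)
      = (((b j).toNat : ℕ) : E) - ((((-(a j)).toNat : ℕ)) : E) := by
    intro j
    have h' : (b j : ℤ) = ((b j).toNat : ℤ) - (((-(a j)).toNat : ℤ)) := by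
      have := hba j; omega
    exact_mod_cast congrArg (Int.cast : ℤ → E) h'
  have hcasta : ∀ j, (a j : E)
      = (((a j).toNat : ℕ) : E) - ((((-(a j)).toNat : ℕ)) : E) := by
    intro j
    have h' : (a j : ℤ) = ((a j).toNat : ℤ) - (((-(a j)).toNat : ℤ)) := by omega
    exact_mod_cast congrArg (Int.cast : ℤ → E) h'
  have hTb : (∑ j ∈ Finset.univ.erase k, (b j : E) * (δ (α k - α j) / (α k - α j)))
      = (∑ j ∈ Finset.univ.erase k, (((b j).toNat : ℕ) : E) * (δ (α k - α j) / (α k - α j)))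
        - ∑ j ∈ Finset.univ.erase k,
            ((((-(a j)).toNat : ℕ)) : E) * (δ (α k - α j) / (α k - α j)) := by
    rw [← Finset.sum_sub_distrib]
    exact Finset.sum_congr rfl fun j _ => by rw [hcastb j]; ring
  have hTa : (∑ j ∈ Finset.univ.erase k, (a j : E) * (δ (α k - α j) / (α k - α j)))
      = (∑ j ∈ Finset.univ.erase k, (((a j).toNat : ℕ) : E) * (δ (α k - α j) / (α k - α j)))
        - ∑ j ∈ Finset.univ.erase k,
            ((((-(a j)).toNat : ℕ)) : E) * (δ (α k - α j) / (α k - α j)) := by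
    rw [← Finset.sum_sub_distrib]
    exact Finset.sum_congr rfl fun j _ => by rw [hcasta j]; ring
  have step : (∑ j ∈ Finset.univ.erase k,
        ((a k * b j - a j * b k : ℤ) : E) * ((δ (α j) - δ (α k)) / (α j - α k)))
      = (a k : E) * (∑ j ∈ Finset.univ.erase k, (b j : E) * (δ (α k - α j) / (α k - α j)))
        - (b k : E) * ∑ j ∈ Finset.univ.erase k, (a j : E) * (δ (α k - α j) / (α k - α j)) := by
    rw [Finset.mul_sum, Finset.mul_sum, ← Finset.sum_sub_distrib]
    refine Finset.sum_congr rfl fun j _ => ?_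
    rw [hD j]; push_cast; ring
  rw [step]
  have hk := hkey (α k)
  rcases lt_or_ge (k : ℕ) m with hk1 | hk'
  · -- case 1 : a k > 0, b k = 0
    obtain ⟨hak, hbk⟩ := h1 k hk1
    have hP0 : (∏ j, (α k - α j) ^ (a j).toNat) = 0 :=
      Finset.prod_eq_zero (Finset.mem_univ k) (by rw [sub_self]; exact zero_pow (by omega))
    have hQ : (∏ j ∈ Finset.univ.erase k, (α k - α j) ^ (-(a j)).toNat)
        = ∏ j, (α k - α j) ^ (-(a j)).toNat :=
      Finset.prod_erase _ (by rw [sub_self, show ((-(a k)).toNat) = 0 by omega, pow_zero])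
    have hR : (∏ j ∈ Finset.univ.erase k, (α k - α j) ^ (b j).toNat)
        = ∏ j, (α k - α j) ^ (b j).toNat :=
      Finset.prod_erase _ (by rw [sub_self, show ((b k).toNat) = 0 by omega, pow_zero])
    have heq : (∏ j ∈ Finset.univ.erase k, (α k - α j) ^ (-(a j)).toNat)
        = ξ * ∏ j ∈ Finset.univ.erase k, (α k - α j) ^ (b j).toNat := by
      rw [hQ, hR, hk, hP0, mul_zero, zero_add]
    have hld : (∑ j ∈ Finset.univ.erase k,
          ((((-(a j)).toNat : ℕ)) : E) * (δ (α k - α j) / (α k - α j)))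
        = δ ξ / ξ + ∑ j ∈ Finset.univ.erase k,
            (((b j).toNat : ℕ) : E) * (δ (α k - α j) / (α k - α j)) := by
      have h0 := congrArg (fun z => δ z / z) heq
      rw [hldQ, ld_mul δ hξ0 hRne, hldR] at h0
      exact h0
    have hbkE : ((b k : ℤ) : E) = 0 := by rw [hbk]; simp
    rw [hTb, hbkE]
    linear_combination (a k : E) * (-hld)
  rcases lt_or_ge (k : ℕ) n with hk2 | hk3
  · -- case 2 : a k = b k < 0
    obtain ⟨hak, habk⟩ := h2 k hk' hk2
    have hQ0 : (∏ j, (α k - α j) ^ (-(a j)).toNat) = 0 :=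
      Finset.prod_eq_zero (Finset.mem_univ k) (by rw [sub_self]; exact zero_pow (by omega))
    have hP : (∏ j ∈ Finset.univ.erase k, (α k - α j) ^ (a j).toNat)
        = ∏ j, (α k - α j) ^ (a j).toNat :=
      Finset.prod_erase _ (by rw [sub_self, show ((a k).toNat) = 0 by omega, pow_zero])
    have hR : (∏ j ∈ Finset.univ.erase k, (α k - α j) ^ (b j).toNat)
        = ∏ j, (α k - α j) ^ (b j).toNat :=
      Finset.prod_erase _ (by rw [sub_self, show ((b k).toNat) = 0 by omega, pow_zero])
    have heq : η * (∏ j ∈ Finset.univ.erase k, (α k - α j) ^ (a j).toNat)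
        = (-ξ) * ∏ j ∈ Finset.univ.erase k, (α k - α j) ^ (b j).toNat := by
      rw [hP, hR]
      rw [hQ0] at hk
      linear_combination -hk
    have hld : δ η / η + (∑ j ∈ Finset.univ.erase k,
          (((a j).toNat : ℕ) : E) * (δ (α k - α j) / (α k - α j)))
        = δ ξ / ξ + ∑ j ∈ Finset.univ.erase k,
            (((b j).toNat : ℕ) : E) * (δ (α k - α j) / (α k - α j)) := by
      have h0 := congrArg (fun z => δ z / z) heq
      rw [ld_mul δ hη0 hPne, ld_mul δ (neg_ne_zero.mpr hξ0) hRne, hldP, hldR,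
        map_neg, neg_div_neg_eq] at h0
      exact h0
    have hbkE : ((b k : ℤ) : E) = ((a k : ℤ) : E) := by rw [← habk]
    rw [hTb, hTa, hbkE]
    linear_combination (-(a k : E)) * hld
  · -- case 3 : a k = 0, b k > 0
    obtain ⟨hak, hbk⟩ := h3 k hk3
    have hR0 : (∏ j, (α k - α j) ^ (b j).toNat) = 0 :=
      Finset.prod_eq_zero (Finset.mem_univ k) (by rw [sub_self]; exact zero_pow (by omega))
    have hQ : (∏ j ∈ Finset.univ.erase k, (α k - α j) ^ (-(a j)).toNat)
        = ∏ j, (α k - α j) ^ (-(a j)).toNat :=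
      Finset.prod_erase _ (by rw [sub_self, show ((-(a k)).toNat) = 0 by omega, pow_zero])
    have hP : (∏ j ∈ Finset.univ.erase k, (α k - α j) ^ (a j).toNat)
        = ∏ j, (α k - α j) ^ (a j).toNat :=
      Finset.prod_erase _ (by rw [sub_self, show ((a k).toNat) = 0 by omega, pow_zero])
    have heq : (∏ j ∈ Finset.univ.erase k, (α k - α j) ^ (-(a j)).toNat)
        = η * ∏ j ∈ Finset.univ.erase k, (α k - α j) ^ (a j).toNat := by
      rw [hQ, hP, hk, hR0, mul_zero, add_zero]
    have hld : (∑ j ∈ Finset.univ.erase k,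
          ((((-(a j)).toNat : ℕ)) : E) * (δ (α k - α j) / (α k - α j)))
        = δ η / η + ∑ j ∈ Finset.univ.erase k,
            (((a j).toNat : ℕ) : E) * (δ (α k - α j) / (α k - α j)) := by
      have h0 := congrArg (fun z => δ z / z) heq
      rw [hldQ, ld_mul δ hη0 hPne, hldP] at h0
      exact h0
    have hakE : ((a k : ℤ) : E) = 0 := by rw [hak]; simp
    rw [hTa, hakE]
    linear_combination (b k : E) * hld
end

section
/- Let F be a differential field of characteristic zero, θ transcendental over F, and α, β ∈ F distinct. Let g = (θ-α)/(θ-β) ∈ F(θ). Suppose E is a differential extension of F(θ) containing elements L_α, L_β with L_α' = (θ-α)'/(θ-α), L_β' = (θ-β)'/(θ-β), and dilogarithmic integrals A, B with A' = -(g'/g)·M and B' = -((g⁻¹)'/g⁻¹)·N, where M' = (1-g)'/(1-g) and N' = (1-g⁻¹)'/(1-g⁻¹). Then there exist constants c and d (in the constants of E) such that A + B = L_α·L_β - (1/2)·(L_α² + L_β²) + d·(L_α - L_β) + c. -/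
/-- Inversion identity: for `g = (θ-α)/(θ-β)` with `θ` transcendental over `F`
and distinct `α, β ∈ F`, if `A`, `B` are dilogarithmic integrals of `g` and
`g⁻¹` and `L_α`, `L_β` logarithms of `θ-α`, `θ-β`, then for some constants
`c, d`: `A + B = L_α·L_β - ½(L_α² + L_β²) + d·(L_α - L_β) + c`. -/
theorem stmt9 {E : Type*} [Field E] [CharZero E] (δ : Derivation ℚ E E)
    (F : Subfield E) (hFδ : ∀ y ∈ F, δ y ∈ F)
    (θ : E) (hθ : Transcendental (↥F) θ)
    (α β : E) (hα : α ∈ F) (hβ : β ∈ F) (hαβ : α ≠ β)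
    (Lα Lβ M N A B : E)
    (hLα : δ Lα = δ (θ - α) / (θ - α)) (hLβ : δ Lβ = δ (θ - β) / (θ - β))
    (hM : δ M = δ (1 - (θ - α) / (θ - β)) / (1 - (θ - α) / (θ - β)))
    (hN : δ N = δ (1 - ((θ - α) / (θ - β))⁻¹) / (1 - ((θ - α) / (θ - β))⁻¹))
    (hA : δ A = -(δ ((θ - α) / (θ - β)) / ((θ - α) / (θ - β))) * M)
    (hB : δ B = -(δ (((θ - α) / (θ - β))⁻¹) / ((θ - α) / (θ - β))⁻¹) * N) :
    ∃ c d : E, δ c = 0 ∧ δ d = 0 ∧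
      A + B = Lα * Lβ - (1 / 2 : E) * (Lα ^ 2 + Lβ ^ 2) + d * (Lα - Lβ) + c := by
  have hu : θ - α ≠ 0 := by
    intro h
    exact hθ (by rw [sub_eq_zero.mp h]; exact isAlgebraic_algebraMap (⟨α, hα⟩ : F))
  have hv : θ - β ≠ 0 := by
    intro h
    exact hθ (by rw [sub_eq_zero.mp h]; exact isAlgebraic_algebraMap (⟨β, hβ⟩ : F))
  have hab : α - β ≠ 0 := sub_ne_zero.mpr hαβ
  have hba : β - α ≠ 0 := sub_ne_zero.mpr (Ne.symm hαβ)
  have h1 : 1 - (θ - α) / (θ - β) = (α - β) / (θ - β) := by field_simp; ring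
  have h2 : ((θ - α) / (θ - β))⁻¹ = (θ - β) / (θ - α) := by rw [inv_div]
  have h3 : 1 - (θ - β) / (θ - α) = (β - α) / (θ - α) := by field_simp; ring
  rw [h1] at hM
  rw [h2, h3] at hN
  rw [h2] at hB
  have ld : ∀ a b : E, δ (a / b) = b⁻¹ ^ 2 * (b * δ a - a * δ b) := fun a b => by
    simpa [smul_eq_mul] using δ.leibniz_div a b
  -- clean formulas
  set p := δ (θ - α) / (θ - α) with hp
  set q := δ (θ - β) / (θ - β) with hq
  set w := δ (α - β) / (α - β) with hw
  have hM' : δ M = w - q := by rw [hM, ld, hw, hq]; field_simp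
  have hN' : δ N = w - p := by
    rw [hN, ld, show β - α = -(α - β) by ring, map_neg, hw, hp]; field_simp; ring
  have hA' : δ A = -(p - q) * M := by
    rw [hA, ld, hp, hq]; field_simp
  have hB' : δ B = -(q - p) * N := by
    rw [hB, ld, hp, hq]; field_simp
  have h12 : ∀ x : E, δ ((1 / 2 : E) * x) = (1 / 2 : E) * δ x := fun x => by
    rw [show (1 / 2 : E) * x = ((1 / 2 : ℚ)) • x by simp [Rat.smul_def], δ.map_smul]
    simp [Rat.smul_def]
  refine ⟨A + B - (Lα * Lβ - (1 / 2 : E) * (Lα ^ 2 + Lβ ^ 2)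
      + (N - M + Lα - Lβ) * (Lα - Lβ)), N - M + Lα - Lβ, ?_, ?_, by ring⟩
  · simp only [map_sub, map_add, h12, sq, Derivation.leibniz, smul_eq_mul,
      hA', hB', hM', hN', hLα, hLβ, ← hp, ← hq]
    ring
  · simp only [map_sub, map_add, hM', hN', hLα, hLβ, ← hp, ← hq]
    ring
end

section
/- Let F be a differential field of characteristic zero and suppose v ∈ F can be written as v = Σ_{i∈I} r_i·(g_i'/g_i) + Σ_{j∈J} a_j·u_j'/λ_j + Σ_{k∈K} b_k·v_k'·E_k + w', where I, J, K are finite, r_i, w, u_j, λ_j, v_k, E_k ∈ F, g_i ∈ F \ {0,1}, λ_j' = u_j'/u_j, E_k' = (-v_k²)'·E_k, the a_j, b_k are constants, and for each i: r_i' = c_i·(1-g_i)'/(1-g_i) + Σ_{l∈I} c_{il}·(g_l'/g_l) with constants c_i, c_{il} satisfying c_{il} = c_{li}. Then there exists a differential field extension E of F with the same constants, generated over F by logarithms, dilogarithmic integrals, logarithmic integrals, and error functions of elements of F, which contains an element u with u' = v. -/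
open Polynomial
set_option linter.unusedSectionVars false
set_option maxHeartbeats 1000000
noncomputable section
namespace Stmt11Aux
universe u

section
variable {K : Type*} [Field K] [CharZero K]


variable {K : Type*} [Field K] [CharZero K]

/-- The derivation on `K[X]` acting as `δ` on coefficients and sending `X` to `C s`. -/
def dP (δ : Derivation ℚ K K) (s : K) : Derivation ℚ K[X] K[X] :=
  PolynomialModule.equivPolynomialSelf.compDer δ.mapCoeffs
    + (Polynomial.mkDerivation K (C s)).restrictScalars ℚ

variable (δ : Derivation ℚ K K) (s : K)

lemma dP_coeff (p : K[X]) (i : ℕ) :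
    (dP δ s p).coeff i = δ (p.coeff i) + p.coeff (i + 1) * (i + 1) * s := by
  show (PolynomialModule.equivPolynomialSelf.compDer δ.mapCoeffs p
      + (Polynomial.mkDerivation K (C s)).restrictScalars ℚ p).coeff i = _
  rw [Polynomial.coeff_add]
  have h1 : (PolynomialModule.equivPolynomialSelf.compDer δ.mapCoeffs p).coeff i
      = δ (p.coeff i) := rfl
  have h2 : ((Polynomial.mkDerivation K (C s)).restrictScalars ℚ p).coeff i
      = p.coeff (i + 1) * (i + 1) * s := by
    show ((Polynomial.mkDerivation K (C s)) p).coeff i = _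
    rw [Polynomial.mkDerivation_apply, smul_eq_mul, Polynomial.coeff_mul_C,
      Polynomial.coeff_derivative]
  rw [h1, h2]

lemma dP_C (a : K) : dP δ s (C a) = C (δ a) := by
  ext i
  rw [dP_coeff]
  rcases i with _ | i <;> simp [Polynomial.coeff_C]

lemma dP_X : dP δ s X = C s := by
  ext i
  rw [dP_coeff]
  rcases i with _ | i <;> simp [Polynomial.coeff_X, Polynomial.coeff_C]
  rcases i with _ | i <;> simp

lemma dP_natCast (n : ℕ) : δ ((n : K)) = 0 := by
  have : ((n : K)) = ((n : ℚ) : K) := by push_cast; ring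
  rw [this, ← Rat.smul_one_eq_cast, Derivation.map_smul, Derivation.map_one_eq_zero, smul_zero]

lemma dP_degree_lt {q : K[X]} (hq : q.Monic) : (dP δ s q).degree < q.degree := by
  have hq0 : q ≠ 0 := hq.ne_zero
  rw [Polynomial.degree_eq_natDegree hq0]
  refine Polynomial.degree_lt_iff_coeff_zero _ _ |>.2 fun m hm => ?_
  have hm' : q.natDegree ≤ m := by exact_mod_cast hm
  rw [dP_coeff]
  rcases eq_or_lt_of_le hm' with h | h
  · rw [← h]
    have : q.coeff q.natDegree = 1 := hq.coeff_natDegree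
    rw [this, Polynomial.coeff_natDegree_succ_eq_zero]
    simp
  · rw [Polynomial.coeff_eq_zero_of_natDegree_lt h,
      Polynomial.coeff_eq_zero_of_natDegree_lt (by omega)]
    simp

/-- If `s` is not a derivative in `K` and `dP δ s p = 0` then `p` is constant. -/
lemma dP_eq_zero_natDegree (hns : ¬ ∃ f : K, δ f = s) {p : K[X]} (hp0 : p ≠ 0)
    (h : dP δ s p = 0) : p.natDegree = 0 := by
  by_contra hd
  have hd1 : 1 ≤ p.natDegree := Nat.one_le_iff_ne_zero.2 hd
  have hlead : δ (p.coeff p.natDegree) = 0 := by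
    have := congrArg (fun q => Polynomial.coeff q p.natDegree) h
    simp only [Polynomial.coeff_zero] at this
    rw [dP_coeff, Polynomial.coeff_natDegree_succ_eq_zero] at this
    simpa using this
  have hkey := congrArg (fun q => Polynomial.coeff q (p.natDegree - 1)) h
  simp only [Polynomial.coeff_zero] at hkey
  rw [dP_coeff] at hkey
  have hidx : p.natDegree - 1 + 1 = p.natDegree := by omega
  rw [hidx] at hkey
  have hcast : ((p.natDegree - 1 : ℕ) : K) + 1 = (p.natDegree : K) := by
    have : ((p.natDegree - 1 : ℕ) : K) = (p.natDegree : K) - 1 := by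
      push_cast [Nat.cast_sub hd1]; ring
    rw [this]; ring
  rw [hcast] at hkey
  set a := p.coeff (p.natDegree - 1) with ha
  set l := p.coeff p.natDegree with hl
  have hlne : l ≠ 0 := Polynomial.leadingCoeff_ne_zero.mpr hp0
  have hn0 : ((p.natDegree : K)) ≠ 0 := Nat.cast_ne_zero.2 (by omega)
  apply hns
  refine ⟨-a / (l * (p.natDegree : K)), ?_⟩
  have hδden : δ (l * (p.natDegree : K)) = 0 := by
    rw [Derivation.leibniz, hlead, dP_natCast]
    simp
  have hδa : δ a = -(l * (p.natDegree : K) * s) := eq_neg_of_add_eq_zero_left hkey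
  rw [Derivation.leibniz_div_const _ _ _ hδden, map_neg, hδa]
  simp only [smul_neg, neg_neg, smul_eq_mul]
  field_simp


variable (dd : Derivation ℚ K[X] K[X])

local notation "φ" => algebraMap K[X] (RatFunc K)

lemma phi_inj : Function.Injective (φ : K[X] →+* RatFunc K) := RatFunc.algebraMap_injective K

lemma phi_ne_zero {p : K[X]} (hp : p ≠ 0) : (φ) p ≠ 0 := by
  simpa using (map_ne_zero_iff _ (phi_inj)).2 hp

/-- The candidate derivation on `RatFunc K` induced by a derivation `dd` on `K[X]`. -/
def Dfun (x : RatFunc K) : RatFunc K :=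
  ((φ) (dd x.num) * (φ) x.denom - (φ) x.num * (φ) (dd x.denom)) / (φ) x.denom ^ 2

lemma Dfun_div (p q : K[X]) (hq : q ≠ 0) :
    Dfun dd ((φ) p / (φ) q) = ((φ) (dd p) * (φ) q - (φ) p * (φ) (dd q)) / (φ) q ^ 2 := by
  set f := (φ) p / (φ) q with hf
  have hq' : (φ) q ≠ 0 := phi_ne_zero hq
  have hM' : (φ) f.denom ≠ 0 := phi_ne_zero f.denom_ne_zero
  have h0 : (φ) f.num / (φ) f.denom = (φ) p / (φ) q := by rw [f.num_div_denom]
  have h1 := (div_eq_div_iff hM' hq').1 h0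
  have hcross : f.num * q = p * f.denom := by
    apply phi_inj; rw [map_mul, map_mul]; exact h1
  have e2 := congrArg (φ) (congrArg dd hcross)
  simp only [Derivation.leibniz, smul_eq_mul, map_add, map_mul] at e2
  show ((φ) (dd f.num) * (φ) f.denom - (φ) f.num * (φ) (dd f.denom)) / (φ) f.denom ^ 2 = _
  rw [div_eq_div_iff (pow_ne_zero 2 hM') (pow_ne_zero 2 hq')]
  linear_combination ((φ) f.denom * (φ) q) * e2
    - ((φ) (dd f.denom) * (φ) q + (φ) (dd q) * (φ) f.denom) * h1

lemma Dfun_algebraMap (p : K[X]) : Dfun dd ((φ) p) = (φ) (dd p) := by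
  have := Dfun_div dd p 1 one_ne_zero
  simpa using this

lemma Dfun_add' (p1 q1 p2 q2 : K[X]) (h1 : q1 ≠ 0) (h2 : q2 ≠ 0) :
    Dfun dd ((φ) p1 / (φ) q1 + (φ) p2 / (φ) q2)
      = Dfun dd ((φ) p1 / (φ) q1) + Dfun dd ((φ) p2 / (φ) q2) := by
  have h1' : (φ) q1 ≠ 0 := phi_ne_zero h1
  have h2' : (φ) q2 ≠ 0 := phi_ne_zero h2
  have hsum : (φ) p1 / (φ) q1 + (φ) p2 / (φ) q2
      = (φ) (p1 * q2 + p2 * q1) / (φ) (q1 * q2) := by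
    simp only [map_add, map_mul]
    field_simp
  rw [hsum, Dfun_div dd _ _ (mul_ne_zero h1 h2), Dfun_div dd _ _ h1, Dfun_div dd _ _ h2]
  simp only [map_add, map_mul, Derivation.leibniz, smul_eq_mul]
  field_simp
  ring

lemma Dfun_mul' (p1 q1 p2 q2 : K[X]) (h1 : q1 ≠ 0) (h2 : q2 ≠ 0) :
    Dfun dd ((φ) p1 / (φ) q1 * ((φ) p2 / (φ) q2))
      = (φ) p1 / (φ) q1 * Dfun dd ((φ) p2 / (φ) q2)
        + (φ) p2 / (φ) q2 * Dfun dd ((φ) p1 / (φ) q1) := by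
  have h1' : (φ) q1 ≠ 0 := phi_ne_zero h1
  have h2' : (φ) q2 ≠ 0 := phi_ne_zero h2
  rw [div_mul_div_comm, ← map_mul, ← map_mul, Dfun_div dd _ _ (mul_ne_zero h1 h2),
    Dfun_div dd _ _ h1, Dfun_div dd _ _ h2]
  simp only [map_mul, Derivation.leibniz, smul_eq_mul, map_add]
  field_simp
  ring

lemma Dfun_add (x y : RatFunc K) : Dfun dd (x + y) = Dfun dd x + Dfun dd y := by
  rw [← x.num_div_denom, ← y.num_div_denom]
  exact Dfun_add' dd _ _ _ _ x.denom_ne_zero y.denom_ne_zero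

lemma Dfun_mul (x y : RatFunc K) : Dfun dd (x * y) = x * Dfun dd y + y * Dfun dd x := by
  rw [← x.num_div_denom, ← y.num_div_denom]
  exact Dfun_mul' dd _ _ _ _ x.denom_ne_zero y.denom_ne_zero

lemma Dfun_one : Dfun dd 1 = 0 := by
  have : (1 : RatFunc K) = (φ) 1 := by simp
  rw [this, Dfun_algebraMap]
  simp


instance : CharZero (RatFunc K) :=
  charZero_of_injective_algebraMap ((algebraMap K (RatFunc K)).injective)

/-- `Dfun` as a bundled derivation. -/
def DD : @Derivation ℚ (RatFunc K) (RatFunc K) _ _ _ DivisionRing.toRatAlgebra _ _ where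
  toFun := Dfun dd
  map_add' := Dfun_add dd
  map_smul' := fun c x =>
    map_rat_smul (AddMonoidHom.mk' (Dfun dd) (Dfun_add dd)) c x
  map_one_eq_zero' := Dfun_one dd
  leibniz' := fun a b => by
    show Dfun dd (a * b) = a • Dfun dd b + b • Dfun dd a
    simpa [smul_eq_mul] using Dfun_mul dd a b

@[simp] lemma DD_apply (x : RatFunc K) : DD dd x = Dfun dd x := rfl


theorem primStep {K : Type u} [Field K] [CharZero K] (δ : Derivation ℚ K K) (s : K) :
    ∃ (E : Type u) (_ : Field E) (_ : CharZero E) (δE : Derivation ℚ E E) (j : K →+* E) (t : E),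
      (∀ x, δE (j x) = j (δ x)) ∧ (∀ y, δE y = 0 → ∃ x, δ x = 0 ∧ j x = y) ∧
      δE t = j s ∧ Subfield.closure (Set.range ⇑j ∪ {t}) = ⊤ := by
  by_cases h : ∃ f : K, δ f = s
  · obtain ⟨f, hf⟩ := h
    refine ⟨K, inferInstance, inferInstance, δ, RingHom.id K, f, by simp, fun y hy => ⟨y, hy, rfl⟩,
      by simpa using hf, ?_⟩
    rw [eq_top_iff]
    intro y _
    apply Subfield.subset_closure
    left
    exact ⟨y, rfl⟩
  · set dd := dP δ s with hdd
    refine ⟨RatFunc K, inferInstance, inferInstance,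
      DD dd, algebraMap K (RatFunc K), RatFunc.X, ?_, ?_, ?_, ?_⟩
    · intro x
      rw [RatFunc.algebraMap_eq_C, ← RatFunc.algebraMap_C, ← RatFunc.algebraMap_C]
      rw [DD_apply, Dfun_algebraMap, hdd, dP_C]
    · intro y hy0
      have hy : Dfun dd y = 0 := by rw [← DD_apply, hy0]
      unfold Dfun at hy
      rw [_root_.div_eq_zero_iff] at hy
      have hden : (algebraMap K[X] (RatFunc K)) y.denom ^ 2 ≠ 0 :=
        pow_ne_zero 2 (phi_ne_zero y.denom_ne_zero)
      have hnum0 : dd y.num * y.denom = y.num * dd y.denom := by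
        apply phi_inj
        rw [map_mul, map_mul]
        rcases hy with hy | hy
        · linear_combination hy
        · exact absurd hy hden
      have hdvd : y.denom ∣ dd y.denom := by
        have h1 : y.denom ∣ y.num * dd y.denom := ⟨dd y.num, by linear_combination -hnum0⟩
        exact (y.isCoprime_num_denom.symm).dvd_of_dvd_mul_left h1
      have hddden : dd y.denom = 0 :=
        Polynomial.eq_zero_of_dvd_of_degree_lt hdvd (dP_degree_lt δ s y.monic_denom)
      have hdeg : y.denom.natDegree = 0 :=
        dP_eq_zero_natDegree δ s h y.denom_ne_zero hddden
      have hden1 : y.denom = 1 := Polynomial.eq_one_of_monic_natDegree_zero y.monic_denom hdeg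
      have hddnum : dd y.num = 0 := by
        have := hnum0
        rw [hddden, mul_zero, hden1, mul_one] at this
        exact this
      rcases eq_or_ne y.num 0 with h0 | h0
      · refine ⟨0, by simp, ?_⟩
        rw [map_zero, ← y.num_div_denom, h0, map_zero, zero_div]
      · have hdegn : y.num.natDegree = 0 := dP_eq_zero_natDegree δ s h h0 hddnum
        obtain ⟨x, hx⟩ := Polynomial.natDegree_eq_zero.1 hdegn
        have hyx : algebraMap K (RatFunc K) x = y := by
          rw [RatFunc.algebraMap_eq_C, ← RatFunc.algebraMap_C, hx, ← y.num_div_denom, hden1]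
          simp
        refine ⟨x, ?_, hyx⟩
        have : (DD dd) (algebraMap K (RatFunc K) x) = algebraMap K (RatFunc K) (δ x) := by
          rw [RatFunc.algebraMap_eq_C, ← RatFunc.algebraMap_C, ← RatFunc.algebraMap_C,
            DD_apply, Dfun_algebraMap, hdd, dP_C]
        rw [hyx, hy0] at this
        exact ((map_eq_zero_iff _ ((algebraMap K (RatFunc K)).injective)).1 this.symm)
    · rw [← RatFunc.algebraMap_X, DD_apply, Dfun_algebraMap, hdd, dP_X,
        RatFunc.algebraMap_C, ← RatFunc.algebraMap_eq_C]
    · rw [eq_top_iff]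
      intro y _
      set S := Subfield.closure (Set.range ⇑(algebraMap K (RatFunc K)) ∪ {RatFunc.X}) with hS
      have hXS : RatFunc.X ∈ S := Subfield.subset_closure (Or.inr rfl)
      have hpoly : ∀ p : K[X], (algebraMap K[X] (RatFunc K)) p ∈ S := by
        intro p
        induction p using Polynomial.induction_on' with
        | add f g hf hg => rw [map_add]; exact S.add_mem hf hg
        | monomial n a =>
          rw [← Polynomial.C_mul_X_pow_eq_monomial, map_mul, map_pow, RatFunc.algebraMap_X,
            RatFunc.algebraMap_C, ← RatFunc.algebraMap_eq_C]
          exact S.mul_mem (Subfield.subset_closure (Or.inl ⟨a, rfl⟩)) (S.pow_mem hXS n)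
      rw [← y.num_div_denom]
      exact S.div_mem (hpoly _) (hpoly _)


lemma closure_comp {K E : Type*} [Field K] [Field E] (j : K →+* E) (S : Set K) (T : Set E)
    (hK : Subfield.closure S = ⊤) (hE : Subfield.closure (Set.range ⇑j ∪ T) = ⊤) :
    Subfield.closure (⇑j '' S ∪ T) = ⊤ := by
  have hmap : (Subfield.closure S).map j ≤ Subfield.closure (⇑j '' S ∪ T) := by
    rw [Subfield.map_le_iff_le_comap]
    refine Subfield.closure_le.2 fun z hz => ?_
    exact Subfield.subset_closure (Or.inl ⟨z, hz, rfl⟩)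
  have h1 : Set.range ⇑j ∪ T ⊆ ↑(Subfield.closure (⇑j '' S ∪ T)) := by
    rintro y (⟨x, rfl⟩ | hy)
    · exact hmap ⟨x, by rw [hK]; trivial, rfl⟩
    · exact Subfield.subset_closure (Or.inr hy)
  rw [eq_top_iff, ← hE]
  exact Subfield.closure_le.2 h1

theorem adjoinFamilyFin {K : Type u} [Field K] [CharZero K] (δ : Derivation ℚ K K)
    (n : ℕ) (s : Fin n → K) :
    ∃ (E : Type u) (_ : Field E) (_ : CharZero E) (δE : Derivation ℚ E E) (j : K →+* E)
      (t : Fin n → E),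
      (∀ x, δE (j x) = j (δ x)) ∧ (∀ y, δE y = 0 → ∃ x, δ x = 0 ∧ j x = y) ∧
      (∀ m, δE (t m) = j (s m)) ∧ Subfield.closure (Set.range ⇑j ∪ Set.range t) = ⊤ := by
  induction n generalizing K with
  | zero =>
    refine ⟨K, inferInstance, inferInstance, δ, RingHom.id K, Fin.elim0, by simp,
      fun y hy => ⟨y, hy, rfl⟩, fun m => m.elim0, ?_⟩
    rw [eq_top_iff]
    intro y _
    exact Subfield.subset_closure (Or.inl ⟨y, rfl⟩)
  | succ n ih =>
    obtain ⟨E₁, _, _, δ₁, j₁, t0, hcomm₁, hconst₁, ht0, hcl₁⟩ := primStep δ (s 0)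
    obtain ⟨E₂, _, _, δ₂, j₂, tt, hcomm₂, hconst₂, htt, hcl₂⟩ :=
      ih δ₁ (fun m => j₁ (s m.succ))
    refine ⟨E₂, inferInstance, inferInstance, δ₂, j₂.comp j₁,
      Fin.cons (j₂ t0) tt, ?_, ?_, ?_, ?_⟩
    · intro x
      simp only [RingHom.coe_comp, Function.comp_apply]
      rw [hcomm₂, hcomm₁]
    · intro y hy
      obtain ⟨z, hz, rfl⟩ := hconst₂ y hy
      obtain ⟨x, hx, rfl⟩ := hconst₁ z hz
      exact ⟨x, hx, rfl⟩
    · intro m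
      refine Fin.cases ?_ ?_ m
      · rw [Fin.cons_zero, hcomm₂, ht0]
        rfl
      · intro i
        rw [Fin.cons_succ]
        exact htt i
    · have hset : Set.range ⇑(j₂.comp j₁) ∪ Set.range (Fin.cons (j₂ t0) tt : Fin (n+1) → E₂)
          = ⇑j₂ '' (Set.range ⇑j₁ ∪ {t0}) ∪ Set.range tt := by
        rw [Set.image_union, Set.image_singleton, RingHom.coe_comp, Set.range_comp,
          Fin.range_cons, Set.insert_eq, ← Set.union_assoc]
      rw [hset]
      exact closure_comp j₂ _ _ hcl₁ hcl₂

theorem adjoinFamily {K : Type u} [Field K] [CharZero K] (δ : Derivation ℚ K K)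
    (ι : Type) [Fintype ι] (s : ι → K) :
    ∃ (E : Type u) (_ : Field E) (_ : CharZero E) (δE : Derivation ℚ E E) (j : K →+* E)
      (t : ι → E),
      (∀ x, δE (j x) = j (δ x)) ∧ (∀ y, δE y = 0 → ∃ x, δ x = 0 ∧ j x = y) ∧
      (∀ m, δE (t m) = j (s m)) ∧ Subfield.closure (Set.range ⇑j ∪ Set.range t) = ⊤ := by
  obtain ⟨E, fE, cE, δE, j, t, h1, h2, h3, h4⟩ :=
    adjoinFamilyFin δ (Fintype.card ι) (s ∘ (Fintype.equivFin ι).symm)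
  refine ⟨E, fE, cE, δE, j, t ∘ (Fintype.equivFin ι), h1, h2,
    fun m => by simpa using h3 ((Fintype.equivFin ι) m), ?_⟩
  rwa [Function.Surjective.range_comp (Fintype.equivFin ι).surjective t]

end
end Stmt11Aux

universe u

open Stmt11Aux in
/-- If `v ∈ F` admits a 𝒟ℰℒ-expression
`v = Σ rᵢ·gᵢ'/gᵢ + Σ aⱼ·uⱼ'/log uⱼ + Σ bₖ·vₖ'·e^{-vₖ²} + w'` with
`rᵢ' = cᵢ·(1-gᵢ)'/(1-gᵢ) + Σ_l c_{il}·g_l'/g_l`, constants `c_{il} = c_{li}`,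
then some differential field extension `E` of `F` with the same constants,
generated over `F` by logarithms, dilogarithmic integrals, logarithmic
integrals and error functions of elements of `F`, contains an antiderivative
of `v`. -/
theorem stmt11 {F : Type u} [Field F] [CharZero F] (δF : Derivation ℚ F F)
    {I J K : Type} [Fintype I] [Fintype J] [Fintype K]
    (v w : F) (r g : I → F) (a u lam : J → F) (b vk Ek : K → F)
    (c : I → F) (cc : I → I → F)
    (hg : ∀ i, g i ≠ 0 ∧ g i ≠ 1)
    (ha : ∀ j, δF (a j) = 0) (hu : ∀ j, u j ≠ 0)
    (hlam : ∀ j, δF (lam j) = δF (u j) / u j)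
    (hb : ∀ k, δF (b k) = 0)
    (hEk : ∀ k, δF (Ek k) = δF (-(vk k ^ 2)) * Ek k)
    (hc : ∀ i, δF (c i) = 0) (hcc : ∀ i l, δF (cc i l) = 0)
    (hsym : ∀ i l, cc i l = cc l i)
    (hr : ∀ i, δF (r i)
        = c i * (δF (1 - g i) / (1 - g i)) + ∑ l, cc i l * (δF (g l) / g l))
    (hv : v = (∑ i, r i * (δF (g i) / g i)) + (∑ j, a j * (δF (u j) / lam j))
        + (∑ k, b k * δF (vk k) * Ek k) + δF w) :
    ∃ (E : Type u) (_ : Field E) (_ : CharZero E) (δE : Derivation ℚ E E)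
      (ι : F →+* E),
      (∀ x : F, δE (ι x) = ι (δF x)) ∧
      (∀ y : E, δE y = 0 → ∃ x : F, δF x = 0 ∧ ι x = y) ∧
      (∃ (n : ℕ) (θ : Fin n → E),
        Subfield.closure (Set.range ⇑ι ∪ Set.range θ) = ⊤ ∧
        ∀ i : Fin n,
          (∃ h : F, h ≠ 0 ∧ δE (θ i) = ι (δF h) / ι h) ∨
          (∃ g₀ : F, g₀ ≠ 0 ∧ g₀ ≠ 1 ∧ ∃ η : E,
            δE η = -(δE (1 - ι g₀) / (1 - ι g₀)) ∧
            δE (θ i) = (ι (δF g₀) / ι g₀) * η) ∨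
          (∃ p q : F, δF q = δF p / p ∧ δE (θ i) = ι (δF p) / ι q) ∨
          (∃ p q : F, δF q = δF (-(p ^ 2)) * q ∧ δE (θ i) = ι (δF p) * ι q)) ∧
      (∃ z : E, δE z = ι v) := by
  classical
  -- Stage 1: adjoin logarithms, logarithmic integrals and error functions.
  set s₁ : ((I ⊕ I) ⊕ (J ⊕ K)) → F :=
    Sum.elim (Sum.elim (fun i => δF (g i) / g i) (fun i => δF (1 - g i) / (1 - g i)))
      (Sum.elim (fun j => δF (u j) / lam j) (fun k => δF (vk k) * Ek k)) with hs₁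
  obtain ⟨E₁, _, _, δ₁, j₁, t₁, hcomm₁, hconst₁, ht₁, hcl₁⟩ :=
    adjoinFamily δF ((I ⊕ I) ⊕ (J ⊕ K)) s₁
  -- Stage 2: adjoin dilogarithms.
  set s₂ : I → E₁ := fun i => j₁ (δF (g i) / g i) * (-(t₁ (Sum.inl (Sum.inr i)))) with hs₂
  obtain ⟨E₂, _, _, δ₂, j₂, t₂, hcomm₂, hconst₂, ht₂, hcl₂⟩ := adjoinFamily δ₁ I s₂
  set ιF : F →+* E₂ := j₂.comp j₁ with hιF
  have hcommF : ∀ x, δ₂ (ιF x) = ιF (δF x) := by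
    intro x
    simp only [hιF, RingHom.coe_comp, Function.comp_apply]
    rw [hcomm₂, hcomm₁]
  have hmul : ∀ x y : E₂, δ₂ (x * y) = x * δ₂ y + y * δ₂ x := fun x y => by
    rw [Derivation.leibniz, smul_eq_mul, smul_eq_mul]
  -- the adjoined elements
  set L : I → E₂ := fun i => j₂ (t₁ (Sum.inl (Sum.inl i))) with hL
  set M : I → E₂ := fun i => j₂ (t₁ (Sum.inl (Sum.inr i))) with hM
  set Lg : J → E₂ := fun jj => j₂ (t₁ (Sum.inr (Sum.inl jj))) with hLg
  set Er : K → E₂ := fun k => j₂ (t₁ (Sum.inr (Sum.inr k))) with hEr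
  have hδL : ∀ i, δ₂ (L i) = ιF (δF (g i) / g i) := fun i => by
    rw [hL]; show δ₂ (j₂ (t₁ _)) = _; rw [hcomm₂, ht₁]; rfl
  have hδM : ∀ i, δ₂ (M i) = ιF (δF (1 - g i) / (1 - g i)) := fun i => by
    rw [hM]; show δ₂ (j₂ (t₁ _)) = _; rw [hcomm₂, ht₁]; rfl
  have hδLg : ∀ jj, δ₂ (Lg jj) = ιF (δF (u jj) / lam jj) := fun jj => by
    rw [hLg]; show δ₂ (j₂ (t₁ _)) = _; rw [hcomm₂, ht₁]; rfl
  have hδEr : ∀ k, δ₂ (Er k) = ιF (δF (vk k) * Ek k) := fun k => by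
    rw [hEr]; show δ₂ (j₂ (t₁ _)) = _; rw [hcomm₂, ht₁]; rfl
  have hδD2 : ∀ i, δ₂ (t₂ i) = ιF (δF (g i) / g i) * (-(M i)) := fun i => by
    rw [ht₂, hs₂]
    show j₂ (j₁ (δF (g i) / g i) * (-(t₁ (Sum.inl (Sum.inr i))))) = _
    rw [map_mul, map_neg]
    rfl
  have hδconst : ∀ x : F, δF x = 0 → δ₂ (ιF x) = 0 := fun x hx => by
    rw [hcommF, hx, map_zero]
  -- the constant discrepancies eᵢ
  set e : I → E₂ := fun i => ιF (r i) - ιF (c i) * M i - ∑ l, ιF (cc i l) * L l with he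
  have hδe : ∀ i, δ₂ (e i) = 0 := by
    intro i
    rw [he]
    show δ₂ (ιF (r i) - ιF (c i) * M i - ∑ l, ιF (cc i l) * L l) = 0
    rw [map_sub, map_sub, hcommF, hmul, hδM, hδconst _ (hc i), map_sum]
    have hterm : ∀ l ∈ Finset.univ, δ₂ (ιF (cc i l) * L l)
        = ιF (cc i l) * ιF (δF (g l) / g l) := by
      intro l _
      rw [hmul, hδL, hδconst _ (hcc i l)]
      ring
    rw [Finset.sum_congr rfl hterm]
    have hrw : ιF (δF (r i)) = ιF (c i) * ιF (δF (1 - g i) / (1 - g i))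
        + ∑ l, ιF (cc i l) * ιF (δF (g l) / g l) := by
      rw [hr i, map_add, map_mul, map_sum]
      simp only [map_mul]
    rw [hrw]
    ring
  -- the antiderivative z
  set z : E₂ := (∑ i, (e i * L i - ιF (c i) * t₂ i))
      + (2 : E₂)⁻¹ * (∑ i, ∑ l, ιF (cc i l) * (L i * L l))
      + (∑ jj, ιF (a jj) * Lg jj) + (∑ k, ιF (b k) * Er k) + ιF w with hz
  have hδnat : ∀ n : ℕ, δ₂ ((n : E₂)) = 0 := by
    intro n
    have h1 : ((n : E₂)) = ((n : ℚ) : E₂) := by push_cast; ring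
    rw [h1, ← Rat.smul_one_eq_cast, Derivation.map_smul, Derivation.map_one_eq_zero, smul_zero]
  have hδhalf : δ₂ ((2 : E₂)⁻¹) = 0 := by
    rw [Derivation.leibniz_inv]
    have : δ₂ ((2 : E₂)) = 0 := by
      have := hδnat 2
      simpa using this
    rw [this, smul_zero]
  have hδz : δ₂ z = ιF v := by
    have h1 : δ₂ (∑ i, (e i * L i - ιF (c i) * t₂ i))
        = ∑ i, (e i + ιF (c i) * M i) * ιF (δF (g i) / g i) := by
      rw [map_sum]
      refine Finset.sum_congr rfl fun i _ => ?_
      rw [map_sub, hmul, hmul, hδe, hδL, hδD2, hδconst _ (hc i)]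
      ring
    have h2 : δ₂ (∑ i, ∑ l, ιF (cc i l) * (L i * L l))
        = 2 * ∑ i, (∑ l, ιF (cc i l) * L l) * ιF (δF (g i) / g i) := by
      rw [map_sum]
      have hinner : ∀ i ∈ Finset.univ, δ₂ (∑ l, ιF (cc i l) * (L i * L l))
          = ∑ l, (ιF (cc i l) * (L i * ιF (δF (g l) / g l))
            + ιF (cc i l) * (L l * ιF (δF (g i) / g i))) := by
        intro i _
        rw [map_sum]
        refine Finset.sum_congr rfl fun l _ => ?_
        rw [hmul, hmul, hδL, hδL, hδconst _ (hcc i l)]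
        ring
      rw [Finset.sum_congr rfl hinner]
      simp only [Finset.sum_add_distrib]
      have hswap : ∑ i, ∑ l, ιF (cc i l) * (L i * ιF (δF (g l) / g l))
          = ∑ i, ∑ l, ιF (cc i l) * (L l * ιF (δF (g i) / g i)) := by
        rw [Finset.sum_comm]
        refine Finset.sum_congr rfl fun i _ => Finset.sum_congr rfl fun l _ => ?_
        rw [hsym i l]
      rw [hswap]
      rw [two_mul]
      congr 1 <;>
      · refine Finset.sum_congr rfl fun i _ => ?_
        rw [Finset.sum_mul]
        refine Finset.sum_congr rfl fun l _ => ?_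
        ring
    have h3 : δ₂ (∑ jj, ιF (a jj) * Lg jj) = ∑ jj, ιF (a jj) * ιF (δF (u jj) / lam jj) := by
      rw [map_sum]
      refine Finset.sum_congr rfl fun jj _ => ?_
      rw [hmul, hδLg, hδconst _ (ha jj)]
      ring
    have h4 : δ₂ (∑ k, ιF (b k) * Er k) = ∑ k, ιF (b k) * ιF (δF (vk k) * Ek k) := by
      rw [map_sum]
      refine Finset.sum_congr rfl fun k _ => ?_
      rw [hmul, hδEr, hδconst _ (hb k)]
      ring
    have hfin : ∀ i, e i + ιF (c i) * M i + ∑ l, ιF (cc i l) * L l = ιF (r i) := by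
      intro i
      rw [he]
      show ιF (r i) - ιF (c i) * M i - (∑ l, ιF (cc i l) * L l) + ιF (c i) * M i
        + ∑ l, ιF (cc i l) * L l = ιF (r i)
      ring
    rw [hz, map_add, map_add, map_add, map_add, h1, h3, h4, hmul, h2, hδhalf, hcommF]
    rw [hv]
    simp only [map_add, map_mul, map_sum]
    have hcomb : ∑ i, (e i + ιF (c i) * M i) * ιF (δF (g i) / g i)
        + ((2:E₂)⁻¹ * (2 * ∑ i, (∑ l, ιF (cc i l) * L l) * ιF (δF (g i) / g i))
          + (∑ i, ∑ l, ιF (cc i l) * (L i * L l)) * 0)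
        = ∑ i, ιF (r i) * ιF (δF (g i) / g i) := by
      rw [mul_zero, add_zero, inv_mul_cancel_left₀ (two_ne_zero), ← Finset.sum_add_distrib]
      refine Finset.sum_congr rfl fun i _ => ?_
      rw [← add_mul, hfin i]
    rw [hcomb]
    simp only [div_eq_mul_inv]
    ring
  -- certificates and generators
  set θ₀ : ((I ⊕ I) ⊕ (J ⊕ K)) ⊕ I → E₂ := Sum.elim (fun m => j₂ (t₁ m)) t₂ with hθ₀
  set nn : ℕ := Fintype.card ((((I ⊕ I) ⊕ (J ⊕ K)) ⊕ I)) with hnn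
  set eqv : Fin nn ≃ (((I ⊕ I) ⊕ (J ⊕ K)) ⊕ I) := (Fintype.equivFin _).symm with heqv
  refine ⟨E₂, inferInstance, inferInstance, δ₂, ιF, hcommF, ?_, ⟨nn, θ₀ ∘ eqv, ?_, ?_⟩, z, hδz⟩
  · intro y hy
    obtain ⟨z₁, hz₁, rfl⟩ := hconst₂ y hy
    obtain ⟨x, hx, rfl⟩ := hconst₁ z₁ hz₁
    exact ⟨x, hx, rfl⟩
  · -- closure
    have hrange : Set.range (θ₀ ∘ ⇑eqv) = ⇑j₂ '' Set.range t₁ ∪ Set.range t₂ := by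
      rw [Function.Surjective.range_comp eqv.surjective θ₀, hθ₀, Set.Sum.elim_range]
      have h6 : Set.range (fun m => j₂ (t₁ m)) = ⇑j₂ '' Set.range t₁ := Set.range_comp ⇑j₂ t₁
      rw [h6]
    have hset : Set.range ⇑ιF ∪ Set.range (θ₀ ∘ ⇑eqv)
        = ⇑j₂ '' (Set.range ⇑j₁ ∪ Set.range t₁) ∪ Set.range t₂ := by
      have h5 : Set.range ⇑ιF = ⇑j₂ '' Set.range ⇑j₁ := Set.range_comp ⇑j₂ ⇑j₁
      rw [hrange, Set.image_union, h5, ← Set.union_assoc]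
    rw [hset]
    exact closure_comp j₂ _ _ hcl₁ hcl₂
  · -- certificates
    intro m
    have hθm : (θ₀ ∘ eqv) m = θ₀ (eqv m) := rfl
    rw [hθm]
    rcases heq : eqv m with ((i | i) | (jj | k)) | i
    · -- logarithm of g i
      left
      refine ⟨g i, (hg i).1, ?_⟩
      show δ₂ (θ₀ (Sum.inl (Sum.inl (Sum.inl i)))) = _
      have : θ₀ (Sum.inl (Sum.inl (Sum.inl i))) = L i := rfl
      rw [this, hδL, map_div₀]
    · -- logarithm of 1 - g i
      left
      refine ⟨1 - g i, sub_ne_zero.2 (Ne.symm (hg i).2), ?_⟩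
      have : θ₀ (Sum.inl (Sum.inl (Sum.inr i))) = M i := rfl
      rw [this, hδM, map_div₀]
    · -- logarithmic integral
      right; right; left
      refine ⟨u jj, lam jj, hlam jj, ?_⟩
      have : θ₀ (Sum.inl (Sum.inr (Sum.inl jj))) = Lg jj := rfl
      rw [this, hδLg, map_div₀]
    · -- error function
      right; right; right
      refine ⟨vk k, Ek k, hEk k, ?_⟩
      have : θ₀ (Sum.inl (Sum.inr (Sum.inr k))) = Er k := rfl
      rw [this, hδEr, map_mul]
    · -- dilogarithm
      right; left
      refine ⟨g i, (hg i).1, (hg i).2, -(M i), ?_, ?_⟩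
      · have h1g : (1 : E₂) - ιF (g i) = ιF (1 - g i) := by rw [map_sub, map_one]
        rw [map_neg, hδM, h1g, hcommF, map_div₀]
      · have : θ₀ (Sum.inr i) = t₂ i := rfl
        rw [this, hδD2, map_div₀]
end
end

section
/- Let F = ℂ(x, T) be the differential field with x' = 1 and T' = T (T transcendental over ℂ(x), representing e^x), with constants ℂ, and let E = F(M, D) where M' = (1-T)'/(1-T) = -T/(1-T), D' = -(T'/T)·M = -M, and M, D are each transcendental over the preceding field with C_E = ℂ. If u ∈ E satisfies u' ∈ F, then there exist r, w ∈ F and a constant c ∈ ℂ with r' = c such that u' = r·(1-T)'/(1-T) + w'. Conversely, for any r, w ∈ F with r' = c ∈ ℂ, the element v := r·(1-T)'/(1-T) + w' ∈ F has the antiderivative c·D + w + r·M ∈ E. -/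
open Polynomial

set_option linter.unusedSectionVars false

section Aux

variable {E : Type*} [Field E] [CharZero E] (δ : Derivation ℚ E E)
variable {K : Subfield E} (hK : ∀ a ∈ K, δ a ∈ K)


lemma deriv_natCast_δ (n : ℕ) : δ (n : E) = 0 := by
  have : ((n : E)) = algebraMap ℚ E (n : ℚ) := by push_cast; ring
  rw [this, Derivation.map_algebraMap]

lemma deriv_closed {S : Set E} (h : ∀ s ∈ S, δ s ∈ Subfield.closure S) :
    ∀ a ∈ Subfield.closure S, δ a ∈ Subfield.closure S := by
  intro a ha
  induction ha using Subfield.closure_induction with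
  | mem x hx => exact h x hx
  | one => simpa using zero_mem _
  | add x y hx hy ihx ihy => rw [map_add]; exact add_mem ihx ihy
  | neg x hx ihx => rw [map_neg]; exact neg_mem ihx
  | inv x hx ihx =>
      rw [Derivation.leibniz_inv, smul_eq_mul]
      exact mul_mem (neg_mem (pow_mem (inv_mem hx) 2)) ihx
  | mul x y hx hy ihx ihy =>
      rw [Derivation.leibniz, smul_eq_mul, smul_eq_mul]
      exact add_mem (mul_mem hx ihy) (mul_mem hy ihx)

lemma mem_not_transcendental {K : Subfield E} {t : E} (h : t ∈ K) :
    ¬ Transcendental (↥K) t := by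
  rw [Transcendental, not_not]
  exact ⟨X - C ⟨t, h⟩, X_sub_C_ne_zero _,
    by simp [Algebra.algebraMap_eq_smul_one, Subfield.smul_def]⟩

/-- restriction of δ to the subfield -/
def δs : ↥K → ↥K := fun a => ⟨δ ↑a, hK _ a.2⟩

@[simp] lemma δs_coe (a : ↥K) : (δs δ hK a : E) = δ (a : E) := rfl

@[simp] lemma δs_add (a b : ↥K) : δs δ hK (a + b) = δs δ hK a + δs δ hK b := by
  apply Subtype.ext; simp

@[simp] lemma δs_zero : δs δ hK 0 = 0 := by apply Subtype.ext; simp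

@[simp] lemma δs_one : δs δ hK 1 = 0 := by apply Subtype.ext; simp

/-- coefficientwise derivative of a polynomial -/
noncomputable def mapδ (P : Polynomial ↥K) : Polynomial ↥K :=
  ∑ i ∈ P.support, C (δs δ hK (P.coeff i)) * X ^ i

lemma coeff_mapδ (P : Polynomial ↥K) (n : ℕ) :
    (mapδ δ hK P).coeff n = δs δ hK (P.coeff n) := by
  rw [mapδ, finset_sum_coeff]
  simp_rw [coeff_C_mul, coeff_X_pow]
  rw [Finset.sum_eq_single n]
  · by_cases h : n ∈ P.support
    · simp
    · simp only [mem_support_iff, not_not] at h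
      simp [h]
  · intro b _ hb
    simp [Ne.symm hb]
  · intro h
    simp only [mem_support_iff, not_not] at h
    simp [h]

lemma mapδ_add (P Q : Polynomial ↥K) :
    mapδ δ hK (P + Q) = mapδ δ hK P + mapδ δ hK Q := by
  ext n; simp [coeff_mapδ]

lemma mapδ_monomial (n : ℕ) (a : ↥K) :
    mapδ δ hK (monomial n a) = monomial n (δs δ hK a) := by
  ext m
  rw [coeff_mapδ]
  by_cases h : m = n <;> simp [coeff_monomial, h] <;> split <;> simp_all

lemma deriv_aeval (t : E) (P : Polynomial ↥K) :
    δ (aeval t P) = aeval t (mapδ δ hK P) + δ t * aeval t (derivative P) := by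
  induction P using Polynomial.induction_on' with
  | add p q hp hq =>
      rw [map_add, map_add, hp, hq, mapδ_add, map_add, derivative_add, map_add]
      ring
  | monomial n a =>
      rw [mapδ_monomial, derivative_monomial, aeval_monomial, aeval_monomial, aeval_monomial]
      rcases n with _ | m
      · simp; rfl
      · have h1 : δ ((algebraMap (↥K) E) a * t ^ (m + 1)) =
            δ ((algebraMap (↥K) E) a) * t ^ (m+1)
              + (algebraMap (↥K) E) a * ((m+1) * t ^ m * δ t) := by
          rw [Derivation.leibniz, Derivation.leibniz_pow]
          simp [smul_eq_mul]
          ring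
        rw [h1]
        have h2 : (algebraMap (↥K) E) (δs δ hK a) = δ ((algebraMap (↥K) E) a) := rfl
        have h3 : (algebraMap (↥K) E) (a * (↑m + 1)) = (algebraMap (↥K) E) a * (m + 1) := by
          push_cast [map_mul]
          simp
        rw [h2]
        simp only [Nat.add_sub_cancel]
        rw [show ((m+1 : ℕ) : ↥K) = ((m : ℕ) : ↥K) + 1 by push_cast; ring, map_mul, map_add,
          map_natCast, map_one]
        push_cast
        ring

end Aux

section Aux2

variable {E : Type*} [Field E] [CharZero E] (δ : Derivation ℚ E E)
variable {K : Subfield E} (hK : ∀ a ∈ K, δ a ∈ K)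

lemma range_algebraMap_subfield : Set.range (algebraMap (↥K) E) = (K : Set E) := by
  ext a
  constructor
  · rintro ⟨y, rfl⟩; exact y.2
  · intro h; exact ⟨⟨a, h⟩, rfl⟩

lemma subring_closure_eq_range_aeval (t : E) :
    Subring.closure ((K : Set E) ∪ {t}) = ((aeval t : Polynomial ↥K →ₐ[↥K] E).range).toSubring := by
  rw [← Algebra.adjoin_singleton_eq_range_aeval, Algebra.adjoin_eq_ring_closure,
    range_algebraMap_subfield]

/-- representation of elements of `K(t)` as quotients of coprime polynomials with monic
denominator. -/
lemma rep (t : E) (htr : Transcendental (↥K) t) {u : E}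
    (hu : u ∈ Subfield.closure ((K : Set E) ∪ {t})) :
    ∃ P Q : Polynomial ↥K, Q.Monic ∧ IsCoprime P Q ∧ u * aeval t Q = aeval t P := by
  classical
  have hinj : Function.Injective (aeval t : Polynomial ↥K →ₐ[↥K] E) :=
    transcendental_iff_injective.mp htr
  rw [Subfield.mem_closure_iff] at hu
  obtain ⟨y, hy, z, hz, hyz⟩ := hu
  rw [subring_closure_eq_range_aeval] at hy hz
  obtain ⟨P₀, rfl⟩ := hy
  obtain ⟨Q₀, rfl⟩ := hz
  by_cases hz0 : Q₀ = 0
  · refine ⟨0, 1, monic_one, (isCoprime_zero_left).mpr isUnit_one, ?_⟩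
    subst hz0
    rw [← hyz]
    simp
  · have hg : GCDMonoid.gcd P₀ Q₀ ≠ 0 := gcd_ne_zero_of_right hz0
    set g := GCDMonoid.gcd P₀ Q₀ with hgdef
    set P₁ := P₀ / g with hP₁
    set Q₁ := Q₀ / g with hQ₁
    have hPg : g * P₁ = P₀ :=
      EuclideanDomain.mul_div_cancel' hg (hgdef ▸ gcd_dvd_left P₀ Q₀)
    have hQg : g * Q₁ = Q₀ :=
      EuclideanDomain.mul_div_cancel' hg (hgdef ▸ gcd_dvd_right P₀ Q₀)
    have hcop : IsCoprime P₁ Q₁ := isCoprime_div_gcd_div_gcd hz0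
    have hQ₁0 : Q₁ ≠ 0 := fun h => hz0 (by rw [← hQg, h, mul_zero])
    set l := Q₁.leadingCoeff with hl
    have hl0 : l ≠ 0 := leadingCoeff_ne_zero.mpr hQ₁0
    have hunit : IsUnit (C l⁻¹ : Polynomial ↥K) := isUnit_C.mpr (IsUnit.mk0 _ (inv_ne_zero hl0))
    refine ⟨P₁ * C l⁻¹, Q₁ * C l⁻¹, monic_mul_leadingCoeff_inv hQ₁0, ?_, ?_⟩
    · exact (isCoprime_mul_unit_right hunit _ _).mpr hcop
    · have hgne : aeval t g ≠ 0 := fun h => hg (hinj (by simpa using h))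
      have hQ₀ne : aeval t Q₀ ≠ 0 := fun h => hz0 (hinj (by simpa using h))
      have hu' : u * aeval t Q₀ = aeval t P₀ := by
        rw [← hyz]; exact div_mul_cancel₀ _ hQ₀ne
      rw [← hPg, ← hQg] at hu'
      rw [map_mul, map_mul] at hu' ⊢
      have : u * (aeval t Q₁ * aeval t (C l⁻¹)) =
          (u * aeval t Q₁) * aeval t (C l⁻¹) := by ring
      rw [this]
      have hcanc : u * aeval t Q₁ = aeval t P₁ := by
        have := hu'
        rw [show u * (aeval t g * aeval t Q₁) = aeval t g * (u * aeval t Q₁) by ring] at this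
        exact mul_left_cancel₀ hgne this
      rw [hcanc]

end Aux2

section Aux3

variable {E : Type*} [Field E] [CharZero E] (δ : Derivation ℚ E E)
variable {K : Subfield E} (hK : ∀ a ∈ K, δ a ∈ K)

/-- the induced derivation-like operation on polynomials, where `ρ` represents `δ t`. -/
noncomputable def Dpoly (ρ P : Polynomial ↥K) : Polynomial ↥K :=
  mapδ δ hK P + ρ * derivative P

lemma aeval_Dpoly (t : E) (ρ : Polynomial ↥K) (hρ : aeval t ρ = δ t) (P : Polynomial ↥K) :
    δ (aeval t P) = aeval t (Dpoly δ hK ρ P) := by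
  rw [Dpoly, map_add, map_mul, hρ, deriv_aeval]

lemma coeff_Dpoly_C (a : ↥K) (P : Polynomial ↥K) (n : ℕ) :
    (Dpoly δ hK (C a) P).coeff n
      = δs δ hK (P.coeff n) + a * (P.coeff (n + 1) * (n + 1)) := by
  rw [Dpoly, coeff_add, coeff_mapδ, coeff_C_mul, coeff_derivative]

lemma ratToPoly (hK : ∀ a ∈ K, δ a ∈ K) (t : E) (htr : Transcendental (↥K) t)
    (hδt : δ t ∈ K)
    (hconstK : ∀ y : E, δ y = 0 → y ∈ K) {u : E}
    (hu : u ∈ Subfield.closure ((K : Set E) ∪ {t}))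
    (S : Polynomial ↥K) (hS : δ u = aeval t S) :
    ∃ P : Polynomial ↥K, u = aeval t P := by
  have hinj : Function.Injective (aeval t : Polynomial ↥K →ₐ[↥K] E) :=
    transcendental_iff_injective.mp htr
  obtain ⟨P, Q, hQm, hcop, hrep⟩ := rep t htr hu
  set ρ : Polynomial ↥K := C (⟨δ t, hδt⟩ : ↥K) with hρdef
  have hρ : aeval t ρ = δ t := by rw [hρdef, aeval_C]; rfl
  have key : S * Q ^ 2 + P * Dpoly δ hK ρ Q = Dpoly δ hK ρ P * Q := by
    apply hinj
    have e1 : δ (aeval t P) = aeval t (Dpoly δ hK ρ P) := aeval_Dpoly δ hK t ρ hρ P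
    have e2 : δ (aeval t Q) = aeval t (Dpoly δ hK ρ Q) := aeval_Dpoly δ hK t ρ hρ Q
    have e3 : δ (aeval t P) = δ u * aeval t Q + u * δ (aeval t Q) := by
      rw [← hrep, Derivation.leibniz, smul_eq_mul, smul_eq_mul]; ring
    rw [map_add, map_mul, map_mul, map_mul, map_pow, ← e1, ← e2, e3, hS, ← hrep]
    ring
  have hdvdPQ : Q ∣ P * Dpoly δ hK ρ Q := by
    refine ⟨Dpoly δ hK ρ P - S * Q, ?_⟩
    linear_combination key
  have hdvd : Q ∣ Dpoly δ hK ρ Q := (hcop.symm).dvd_of_dvd_mul_left hdvdPQ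
  by_cases hn : Q.natDegree = 0
  · have hQ1 : Q = 1 := hQm.natDegree_eq_zero.mp hn
    exact ⟨P, by simpa [hQ1] using hrep⟩
  · exfalso
    have hn1 : 1 ≤ Q.natDegree := Nat.one_le_iff_ne_zero.mpr hn
    have hcoeffDQ : ∀ m : ℕ, Q.natDegree ≤ m → (Dpoly δ hK ρ Q).coeff m = 0 := by
      intro m hm
      rw [hρdef, coeff_Dpoly_C]
      rcases eq_or_lt_of_le hm with h | h
      · rw [← h, hQm.coeff_natDegree, coeff_eq_zero_of_natDegree_lt (by omega)]
        simp
      · rw [coeff_eq_zero_of_natDegree_lt h, coeff_eq_zero_of_natDegree_lt (by omega)]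
        simp
    have hdeg : (Dpoly δ hK ρ Q).degree < Q.degree := by
      rw [degree_eq_natDegree hQm.ne_zero]
      exact (degree_lt_iff_coeff_zero _ _).mpr (fun m hm => hcoeffDQ m (by exact_mod_cast hm))
    have hDQ0 : Dpoly δ hK ρ Q = 0 := eq_zero_of_dvd_of_degree_lt hdvd hdeg
    have hc0 : (Dpoly δ hK ρ Q).coeff (Q.natDegree - 1) = 0 := by rw [hDQ0]; simp
    rw [hρdef, coeff_Dpoly_C, Nat.sub_add_cancel hn1, hQm.coeff_natDegree, one_mul] at hc0
    have hc0E : δ ((Q.coeff (Q.natDegree - 1) : E)) + δ t * (Q.natDegree : E) = 0 := by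
      have h1 := congrArg (Subtype.val : ↥K → E) hc0
      push_cast at h1
      have h2 : ((Q.natDegree - 1 : ℕ) : E) = (Q.natDegree : E) - 1 := by
        rw [Nat.cast_sub hn1, Nat.cast_one]
      rw [h2] at h1
      have h3 : (δs δ hK (Q.coeff (Q.natDegree - 1)) : E)
          = δ ((Q.coeff (Q.natDegree - 1) : E)) := rfl
      rw [h3] at h1 <;> try skip
      linear_combination h1
    have hyd : δ ((Q.coeff (Q.natDegree - 1) : E) + (Q.natDegree : E) * t) = 0 := by
      rw [map_add, Derivation.leibniz, smul_eq_mul, smul_eq_mul, deriv_natCast_δ δ]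
      linear_combination hc0E
    have hyK := hconstK _ hyd
    have hne : (Q.natDegree : E) ≠ 0 := Nat.cast_ne_zero.mpr (by omega)
    have htK : t ∈ K := by
      have heq : t = ((Q.coeff (Q.natDegree - 1) : E) + (Q.natDegree : E) * t
          - (Q.coeff (Q.natDegree - 1) : E)) / (Q.natDegree : E) := by
        field_simp
        ring
      rw [heq]
      exact div_mem (sub_mem hyK (SetLike.coe_mem _)) (natCast_mem K _)
    exact mem_not_transcendental htK htr

end Aux3

section Aux4

variable {E : Type*} [Field E] [CharZero E] (δ : Derivation ℚ E E)
variable {K : Subfield E}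

lemma Dpoly_pow_mul (hK : ∀ a ∈ K, δ a ∈ K) (t : E)
    (hinj : Function.Injective (aeval t : Polynomial ↥K →ₐ[↥K] E))
    (ρ : Polynomial ↥K) (hρ : aeval t ρ = δ t) (r : ℕ) (P Q : Polynomial ↥K) :
    Dpoly δ hK ρ (P ^ r * Q)
      = C (r : ↥K) * P ^ (r - 1) * Dpoly δ hK ρ P * Q + P ^ r * Dpoly δ hK ρ Q := by
  apply hinj
  have h0 : aeval t (Dpoly δ hK ρ (P ^ r * Q)) = δ (aeval t (P ^ r * Q)) :=
    (aeval_Dpoly δ hK t ρ hρ _).symm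
  have hP : δ (aeval t P) = aeval t (Dpoly δ hK ρ P) := aeval_Dpoly δ hK t ρ hρ P
  have hQ : δ (aeval t Q) = aeval t (Dpoly δ hK ρ Q) := aeval_Dpoly δ hK t ρ hρ Q
  rw [h0, map_mul, map_pow, Derivation.leibniz, Derivation.leibniz_pow]
  simp only [map_add, map_mul, map_pow, aeval_C]
  rw [← hP, ← hQ]
  have hcast : (algebraMap (↥K) E) ((r : ↥K)) = (r : E) := by push_cast; simp
  rw [hcast, smul_eq_mul, smul_eq_mul, smul_eq_mul, nsmul_eq_mul]
  ring

lemma noIntPole (hK : ∀ a ∈ K, δ a ∈ K) (T : E) (hTtr : Transcendental (↥K) T)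
    (hδT : δ T = T)
    {q0 : E} (hq0 : q0 ∈ Subfield.closure ((K : Set E) ∪ {T})) (g : ↥K) (hg : g ≠ 0) :
    δ q0 ≠ (g : E) * T / (1 - T) := by
  intro hEq
  have hinj : Function.Injective (aeval T : Polynomial ↥K →ₐ[↥K] E) :=
    transcendental_iff_injective.mp hTtr
  have hT1 : T ≠ 1 := fun h => mem_not_transcendental (h ▸ one_mem K) hTtr
  have hT1' : (1 : E) - T ≠ 0 := fun h => hT1 (by linear_combination -h)
  obtain ⟨A, B, hBm, hcop, hrep⟩ := rep T hTtr hq0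
  have hρ : aeval T (X : Polynomial ↥K) = δ T := by simp [hδT]
  have hBne : (aeval T B : E) ≠ 0 := fun h => by
    simpa [hBm.ne_zero] using hinj (show aeval T B = aeval T 0 by simpa using h)
  -- the fundamental polynomial identity
  have key : C g * X * B ^ 2 = -(X - C 1) * (Dpoly δ hK X A * B - A * Dpoly δ hK X B) := by
    apply hinj
    have e1 : δ (aeval T A) = aeval T (Dpoly δ hK X A) := aeval_Dpoly δ hK T X hρ A
    have e2 : δ (aeval T B) = aeval T (Dpoly δ hK X B) := aeval_Dpoly δ hK T X hρ B
    have e3 : δ q0 * aeval T B + q0 * δ (aeval T B) = δ (aeval T A) := by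
      rw [← hrep, Derivation.leibniz, smul_eq_mul, smul_eq_mul]; ring
    have e4 : δ q0 * (1 - T) = (g : E) * T := by
      rw [hEq, div_mul_cancel₀ _ hT1']
    have e5 : δ q0 * aeval T B * ((1 - T) * aeval T B)
        + q0 * aeval T B * ((1 - T) * δ (aeval T B)) = (1 - T) * δ (aeval T A) * aeval T B := by
      linear_combination ((1 - T) * aeval T B) * e3
    rw [hrep] at e5
    simp only [map_mul, map_pow, map_neg, map_sub, map_one, aeval_C, aeval_X]
    rw [show ((algebraMap (↥K) E) g) = (g : E) from rfl, ← e1, ← e2]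
    linear_combination -(aeval T B) ^ 2 * e4 + e5
  -- `1` is a root of `B`
  have hBroot : B.eval 1 = 0 := by
    have := congrArg (fun p => Polynomial.eval (1 : ↥K) p) key
    simp only [eval_mul, eval_pow, eval_C, eval_X, eval_neg, eval_sub, eval_one, sub_self,
      neg_zero, zero_mul] at this
    have h2 : g * (B.eval 1) ^ 2 = 0 := by linear_combination this
    have := mul_eq_zero.mp h2
    rcases this with h | h
    · exact absurd h hg
    · exact pow_eq_zero_iff (n := 2) (by norm_num) |>.mp h
  have hB0 : B ≠ 0 := hBm.ne_zero
  set r := rootMultiplicity 1 B with hrdef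
  have hr1 : 1 ≤ r := by
    rw [hrdef, Nat.one_le_iff_ne_zero]
    intro h
    have := (rootMultiplicity_pos hB0).mpr hBroot
    omega
  set B₁ := B /ₘ (X - C 1) ^ r with hB₁def
  have hfac : (X - C 1) ^ r * B₁ = B := pow_mul_divByMonic_rootMultiplicity_eq B 1
  have hB₁1 : B₁.eval 1 ≠ 0 := eval_divByMonic_pow_rootMultiplicity_ne_zero 1 hB0
  -- compute D(B)
  have hmapδπ : mapδ δ hK ((X : Polynomial ↥K) - C 1) = 0 := by
    ext n
    rw [coeff_mapδ, coeff_zero]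
    simp only [δs_coe, ZeroMemClass.coe_zero]
    rcases n with _ | _ | n <;>
      simp [coeff_sub, coeff_X, coeff_one, map_neg, Derivation.map_one_eq_zero]
  have hDπ : Dpoly δ hK X ((X : Polynomial ↥K) - C 1) = X := by
    rw [Dpoly, hmapδπ, zero_add, derivative_sub, derivative_X, derivative_C, sub_zero, mul_one]
  obtain ⟨s, hs⟩ : ∃ s, r = s + 1 := ⟨r - 1, (Nat.sub_add_cancel hr1).symm⟩
  have hDB := Dpoly_pow_mul δ hK T hinj X hρ r ((X : Polynomial ↥K) - C 1) B₁
  rw [hfac, hDπ, hs] at hDB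
  simp only [Nat.add_sub_cancel] at hDB
  have key' := key
  rw [hDB, ← hfac, hs] at key'
  have hπ0 : ((X : Polynomial ↥K) - C 1) ≠ 0 := X_sub_C_ne_zero 1
  have key3 : C g * X * ((X : Polynomial ↥K) - C 1) ^ (s + 1) * B₁ ^ 2
      = A * (C ((s + 1 : ℕ) : ↥K) * X * B₁ + ((X : Polynomial ↥K) - C 1) * Dpoly δ hK X B₁)
        - ((X : Polynomial ↥K) - C 1) * Dpoly δ hK X A * B₁ := by
    apply mul_left_cancel₀ (pow_ne_zero (s + 1) hπ0)
    linear_combination key'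
  have hA1 : A.eval 1 = 0 := by
    have h4 := congrArg (fun p => Polynomial.eval (1 : ↥K) p) key3
    simp only [eval_mul, eval_pow, eval_C, eval_X, eval_add, eval_sub, eval_one, sub_self,
      zero_pow, mul_zero, zero_mul, Nat.succ_ne_zero, ne_eq, not_false_iff, add_zero,
      sub_zero] at h4
    have hcast : (((s + 1 : ℕ) : ↥K)) ≠ 0 := fun h => by
      have h2 : ((s + 1 : ℕ) : E) = 0 := by exact_mod_cast congrArg Subtype.val h
      exact Nat.cast_ne_zero.mpr (Nat.succ_ne_zero s) h2
    have h5 : eval 1 A * (((s + 1 : ℕ) : ↥K) * eval 1 B₁) = 0 := by linear_combination -h4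
    rcases mul_eq_zero.mp h5 with h | h
    · exact h
    · rcases mul_eq_zero.mp h with h | h
      · exact absurd h hcast
      · exact absurd h hB₁1
  have hπA : ((X : Polynomial ↥K) - C 1) ∣ A := dvd_iff_isRoot.mpr hA1
  have hπB : ((X : Polynomial ↥K) - C 1) ∣ B := dvd_iff_isRoot.mpr hBroot
  exact Polynomial.not_isUnit_X_sub_C 1 (hcop.isUnit_of_dvd' hπA hπB)

end Aux4

section Aux5

variable {E : Type*} [Field E] [CharZero E] (δ : Derivation ℚ E E)
variable {K : Subfield E}

lemma highdeg (hK : ∀ a ∈ K, δ a ∈ K) (t : E) (htr : Transcendental (↥K) t)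
    (hδt : δ t ∈ K) (hconstK : ∀ y : E, δ y = 0 → y ∈ K)
    (x₀ : E) (hx₀ : x₀ ∈ K) (hδx₀ : δ x₀ = 1)
    (q R : Polynomial ↥K) (hDq : Dpoly δ hK (C ⟨δ t, hδt⟩) q = R)
    (hR : R.natDegree ≤ 1) (hR1 : δ ((R.coeff 1 : E)) = 0) :
    q.natDegree ≤ 1 := by
  by_contra hdeg
  push_neg at hdeg
  have hm2 : 2 ≤ q.natDegree := hdeg
  have hq0 : q ≠ 0 := fun h => by rw [h] at hm2; simp at hm2
  have hlead : q.coeff q.natDegree ≠ 0 := fun h =>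
    (leadingCoeff_ne_zero.mpr hq0) (by rwa [leadingCoeff])
  -- coefficient at m
  have h2 : δs δ hK (q.coeff q.natDegree)
      + (⟨δ t, hδt⟩ : ↥K) * (q.coeff (q.natDegree + 1) * (q.natDegree + 1))
      = R.coeff q.natDegree := by rw [← coeff_Dpoly_C, hDq]
  rw [coeff_eq_zero_of_natDegree_lt (Nat.lt_succ_self _),
    coeff_eq_zero_of_natDegree_lt (lt_of_le_of_lt hR (by omega))] at h2
  simp only [zero_mul, mul_zero, add_zero] at h2
  have hδqm : δ ((q.coeff q.natDegree : E)) = 0 := by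
    have := congrArg (Subtype.val : ↥K → E) h2
    simpa using this
  -- coefficient at m - 1
  have h3 : δs δ hK (q.coeff (q.natDegree - 1))
      + (⟨δ t, hδt⟩ : ↥K) * (q.coeff (q.natDegree - 1 + 1) * ((q.natDegree - 1 : ℕ) + 1))
      = R.coeff (q.natDegree - 1) := by rw [← coeff_Dpoly_C, hDq]
  rw [Nat.sub_add_cancel (by omega)] at h3
  have hγ : δ ((R.coeff (q.natDegree - 1) : E)) = 0 := by
    by_cases hm1 : q.natDegree - 1 = 1
    · rw [hm1]; exact hR1
    · have : R.coeff (q.natDegree - 1) = 0 := coeff_eq_zero_of_natDegree_lt (by omega)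
      rw [this]
      simp
  -- push h3 to E
  have h3E : δ ((q.coeff (q.natDegree - 1) : E))
      + δ t * ((q.coeff q.natDegree : E) * (q.natDegree : E))
      = ((R.coeff (q.natDegree - 1) : E)) := by
    have h4 := congrArg (Subtype.val : ↥K → E) h3
    push_cast at h4
    rw [Nat.cast_sub (by omega : 1 ≤ q.natDegree), Nat.cast_one] at h4
    simp only [δs_coe] at h4
    linear_combination h4
  -- the constant combination
  have hyd : δ ((q.coeff (q.natDegree - 1) : E)
      + (q.natDegree : E) * (q.coeff q.natDegree : E) * t
      - (R.coeff (q.natDegree - 1) : E) * x₀) = 0 := by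
    rw [map_sub, map_add, Derivation.leibniz, Derivation.leibniz, Derivation.leibniz,
      smul_eq_mul, smul_eq_mul, smul_eq_mul, smul_eq_mul, smul_eq_mul, smul_eq_mul,
      deriv_natCast_δ δ, hδqm, hγ, hδx₀]
    linear_combination h3E
  have hyK := hconstK _ hyd
  have hne : (q.natDegree : E) * (q.coeff q.natDegree : E) ≠ 0 := by
    refine mul_ne_zero (Nat.cast_ne_zero.mpr (by omega)) ?_
    exact fun h => hlead (by exact_mod_cast Subtype.ext h)
  have htK : t ∈ K := by
    have heq : t = (((q.coeff (q.natDegree - 1) : E)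
        + (q.natDegree : E) * (q.coeff q.natDegree : E) * t
        - (R.coeff (q.natDegree - 1) : E) * x₀)
        - (q.coeff (q.natDegree - 1) : E) + (R.coeff (q.natDegree - 1) : E) * x₀)
        / ((q.natDegree : E) * (q.coeff q.natDegree : E)) := by
      rw [eq_div_iff hne]; ring
    rw [heq]
    refine div_mem ?_ (mul_mem (natCast_mem K _) (SetLike.coe_mem _))
    exact add_mem (sub_mem hyK (SetLike.coe_mem _))
      (mul_mem (SetLike.coe_mem _) hx₀)
  exact mem_not_transcendental htK htr

lemma coeffE (hK : ∀ a ∈ K, δ a ∈ K) (t : E) (hδt : δ t ∈ K)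
    (P R : Polynomial ↥K) (h : Dpoly δ hK (C ⟨δ t, hδt⟩) P = R) (n : ℕ) :
    δ ((P.coeff n : E)) + δ t * ((P.coeff (n + 1) : E) * ((n : E) + 1))
      = ((R.coeff n : E)) := by
  have h1 := congrArg (fun Q : Polynomial ↥K => ((Q.coeff n : ↥K) : E)) h
  simp only [coeff_Dpoly_C] at h1
  push_cast at h1
  simp only [δs_coe] at h1
  linear_combination h1

end Aux5

section Aux6

variable {E : Type*} [Field E]

lemma closure_closure_union (s t : Set E) :
    Subfield.closure ((Subfield.closure s : Set E) ∪ t) = Subfield.closure (s ∪ t) := by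
  apply le_antisymm
  · rw [Subfield.closure_le]
    apply Set.union_subset
    · exact fun y hy => Subfield.closure_mono Set.subset_union_left hy
    · exact fun y hy => Subfield.subset_closure (Or.inr hy)
  · exact Subfield.closure_mono
      (Set.union_subset_union_left t Subfield.subset_closure)

end Aux6

/-- Example 3.2: let `F = ℂ(x, T)` with `x' = 1`, `T' = T` (`T = e^x`) and let
`E = F(M, D)` where `M = log(1 - e^x)` and `D = ℓ₂(e^x)`, a transcendental
tower with constants `ℂ`.  Then `u ∈ E` has `u' ∈ F` iff
`u' = r·(1-T)'/(1-T) + w'` with `r, w ∈ F`, `r' = c ∈ ℂ`; and conversely any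
such element has antiderivative `c·D + w + r·M ∈ E`. -/
theorem stmt17 {E : Type*} [Field E] [CharZero E] (δ : Derivation ℚ E E)
    (c : ℂ →+* E) (x T M D : E)
    (hc : ∀ a : ℂ, δ (c a) = 0) (hx : δ x = 1) (hT : δ T = T)
    (hM : δ M = δ (1 - T) / (1 - T)) (hD : δ D = -(δ T / T) * M)
    (hxtr : Transcendental (↥(Subfield.closure (Set.range ⇑c))) x)
    (hTtr : Transcendental (↥(Subfield.closure (Set.range ⇑c ∪ {x}))) T)
    (hMtr : Transcendental (↥(Subfield.closure (Set.range ⇑c ∪ {x, T}))) M)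
    (hDtr : Transcendental (↥(Subfield.closure (Set.range ⇑c ∪ {x, T, M}))) D)
    (hgen : Subfield.closure (Set.range ⇑c ∪ {x, T, M, D}) = ⊤)
    (hconst : ∀ y : E, δ y = 0 → ∃ z : ℂ, y = c z) :
    (∀ u : E, δ u ∈ Subfield.closure (Set.range ⇑c ∪ {x, T}) →
      ∃ r w : E, r ∈ Subfield.closure (Set.range ⇑c ∪ {x, T}) ∧
        w ∈ Subfield.closure (Set.range ⇑c ∪ {x, T}) ∧
        (∃ z : ℂ, δ r = c z) ∧
        δ u = r * (δ (1 - T) / (1 - T)) + δ w) ∧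
    (∀ (r w : E), r ∈ Subfield.closure (Set.range ⇑c ∪ {x, T}) →
      w ∈ Subfield.closure (Set.range ⇑c ∪ {x, T}) → ∀ z : ℂ, δ r = c z →
      δ (c z * D + w + r * M) = r * (δ (1 - T) / (1 - T)) + δ w) := by
  classical
  set F₀ := Subfield.closure (Set.range ⇑c ∪ {x}) with hF₀def
  set F := Subfield.closure (Set.range ⇑c ∪ {x, T}) with hFdef
  set K := Subfield.closure (Set.range ⇑c ∪ {x, T, M}) with hKdef
  -- set-level identities
  have hsetF : Set.range ⇑c ∪ {x, T} = (Set.range ⇑c ∪ {x}) ∪ {T} := by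
    ext y; simp only [Set.mem_union, Set.mem_insert_iff, Set.mem_singleton_iff]; tauto
  have hsetK : Set.range ⇑c ∪ {x, T, M} = (Set.range ⇑c ∪ {x, T}) ∪ {M} := by
    ext y; simp only [Set.mem_union, Set.mem_insert_iff, Set.mem_singleton_iff]; tauto
  have hsetD : Set.range ⇑c ∪ {x, T, M, D} = (Set.range ⇑c ∪ {x, T, M}) ∪ {D} := by
    ext y; simp only [Set.mem_union, Set.mem_insert_iff, Set.mem_singleton_iff]; tauto
  have hFK : Subfield.closure ((F₀ : Set E) ∪ {T}) = F := by
    rw [hF₀def, closure_closure_union, ← hsetF]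
  have hKF : Subfield.closure ((F : Set E) ∪ {M}) = K := by
    rw [hFdef, closure_closure_union, ← hsetK]
  have htop : Subfield.closure ((K : Set E) ∪ {D}) = ⊤ := by
    rw [hKdef, closure_closure_union, ← hsetD, hgen]
  -- memberships
  have hcF₀ : ∀ z : ℂ, c z ∈ F₀ := fun z => Subfield.subset_closure (Or.inl ⟨z, rfl⟩)
  have hcF : ∀ z : ℂ, c z ∈ F := fun z => Subfield.subset_closure (Or.inl ⟨z, rfl⟩)
  have hcK : ∀ z : ℂ, c z ∈ K := fun z => Subfield.subset_closure (Or.inl ⟨z, rfl⟩)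
  have hxF₀ : x ∈ F₀ := Subfield.subset_closure (Or.inr rfl)
  have hxF : x ∈ F := Subfield.subset_closure (Or.inr (by simp))
  have hxK : x ∈ K := Subfield.subset_closure (Or.inr (by simp))
  have hTF : T ∈ F := Subfield.subset_closure (Or.inr (by simp))
  have hTK : T ∈ K := Subfield.subset_closure (Or.inr (by simp))
  have hMK : M ∈ K := Subfield.subset_closure (Or.inr (by simp))
  -- δ-closedness
  have hF₀c : ∀ a ∈ F₀, δ a ∈ F₀ := by
    apply deriv_closed
    rintro s (⟨z, rfl⟩ | rfl)
    · rw [hc]; exact zero_mem _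
    · rw [hx]; exact one_mem _
  have hδ1T : δ (1 - T) = -T := by
    rw [map_sub, hT]
    simp
  have hFc : ∀ a ∈ F, δ a ∈ F := by
    apply deriv_closed
    rintro s (⟨z, rfl⟩ | rfl | rfl)
    · rw [hc]; exact zero_mem _
    · rw [hx]; exact one_mem _
    · rw [hT]; exact hTF
  have hKc : ∀ a ∈ K, δ a ∈ K := by
    apply deriv_closed
    rintro s (⟨z, rfl⟩ | rfl | rfl | rfl)
    · rw [hc]; exact zero_mem _
    · rw [hx]; exact one_mem _
    · rw [hT]; exact hTK
    · rw [hM, hδ1T]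
      exact div_mem (neg_mem hTK) (sub_mem (one_mem _) hTK)
  have hconstF : ∀ y : E, δ y = 0 → y ∈ F := fun y hy =>
    (hconst y hy).elim fun z hz => hz ▸ hcF z
  have hconstK : ∀ y : E, δ y = 0 → y ∈ K := fun y hy =>
    (hconst y hy).elim fun z hz => hz ▸ hcK z
  -- nonvanishing
  have hT0 : T ≠ 0 := fun h => mem_not_transcendental (h ▸ zero_mem F₀) hTtr
  have hδM : δ M ∈ F := by
    rw [hM, hδ1T]
    exact div_mem (neg_mem hTF) (sub_mem (one_mem _) hTF)
  have hδD : δ D = -M := by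
    rw [hD, hT, div_self hT0]
    ring
  have hδDK : δ D ∈ K := hδD ▸ neg_mem hMK
  constructor
  · -- forward direction
    intro u hu
    have huK : δ u ∈ K := by
      refine Subfield.closure_mono ?_ hu
      rw [hsetK]
      exact Set.subset_union_left
    have huT : u ∈ Subfield.closure ((K : Set E) ∪ {D}) := by rw [htop]; trivial
    have hinjD : Function.Injective (aeval D : Polynomial ↥K →ₐ[↥K] E) :=
      transcendental_iff_injective.mp hDtr
    have hinjM : Function.Injective (aeval M : Polynomial ↥F →ₐ[↥F] E) :=
      transcendental_iff_injective.mp hMtr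
    obtain ⟨p, hp⟩ := ratToPoly δ hKc D hDtr hδDK hconstK huT (C ⟨δ u, huK⟩)
      (by rw [aeval_C]; rfl)
    have hDp : Dpoly δ hKc (C ⟨δ D, hδDK⟩) p = C ⟨δ u, huK⟩ := by
      apply hinjD
      rw [← aeval_Dpoly δ hKc D (C ⟨δ D, hδDK⟩) (by rw [aeval_C]; rfl) p, ← hp, aeval_C]
      rfl
    have hdegp : p.natDegree ≤ 1 :=
      highdeg δ hKc D hDtr hδDK hconstK x hxK hx p _ hDp
        (by simp) (by simp [coeff_C])
    -- coefficient equations at the D level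
    have hp2 : ((p.coeff 2 : E)) = 0 := by
      rw [coeff_eq_zero_of_natDegree_lt (lt_of_le_of_lt hdegp (by norm_num))]
      rfl
    have hC1 : (((C (⟨δ u, huK⟩ : ↥K)).coeff 1 : ↥K) : E) = 0 := by
      rw [coeff_C, if_neg one_ne_zero]
      rfl
    have hC0 : (((C (⟨δ u, huK⟩ : ↥K)).coeff 0 : ↥K) : E) = δ u := by
      rw [coeff_C, if_pos rfl]
    have e1E := coeffE δ hKc D hδDK p _ hDp 1
    rw [hp2, hC1] at e1E
    simp only [zero_mul, mul_zero, add_zero] at e1E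
    obtain ⟨z, hz⟩ := hconst _ e1E
    have e0E := coeffE δ hKc D hδDK p _ hDp 0
    rw [hC0] at e0E
    -- now the M level
    have huF : δ u ∈ F := hu
    have hp0K : (p.coeff 0 : E) ∈ Subfield.closure ((F : Set E) ∪ {M}) := by
      rw [hKF]; exact SetLike.coe_mem _
    have hδb : δ ((p.coeff 0 : E))
        = aeval M (C (⟨δ u, huF⟩ : ↥F) + C (⟨c z, hcF z⟩ : ↥F) * X) := by
      rw [map_add, map_mul, aeval_C, aeval_C, aeval_X]
      rw [show ((algebraMap (↥F) E) (⟨δ u, huF⟩ : ↥F)) = δ u from rfl,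
        show ((algebraMap (↥F) E) (⟨c z, hcF z⟩ : ↥F)) = c z from rfl, ← hz]
      push_cast at e0E
      rw [hδD] at e0E
      linear_combination e0E
    obtain ⟨q, hq⟩ := ratToPoly δ hFc M hMtr hδM hconstF hp0K _ hδb
    have hDq : Dpoly δ hFc (C ⟨δ M, hδM⟩) q
        = C (⟨δ u, huF⟩ : ↥F) + C (⟨c z, hcF z⟩ : ↥F) * X := by
      apply hinjM
      rw [← aeval_Dpoly δ hFc M (C ⟨δ M, hδM⟩) (by rw [aeval_C]; rfl) q, ← hq, hδb]
    have hS2deg : (C (⟨δ u, huF⟩ : ↥F) + C (⟨c z, hcF z⟩ : ↥F) * X).natDegree ≤ 1 := by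
      refine le_trans (natDegree_add_le _ _) (max_le (by simp) ?_)
      exact le_trans (natDegree_mul_le) (by simp)
    have hS2coeff1 : ((((C (⟨δ u, huF⟩ : ↥F) + C (⟨c z, hcF z⟩ : ↥F) * X)).coeff 1 : ↥F) : E)
        = c z := by
      rw [coeff_add, coeff_C, coeff_C_mul, coeff_X_one, if_neg one_ne_zero]
      push_cast
      simp
    have hS2coeff0 : ((((C (⟨δ u, huF⟩ : ↥F) + C (⟨c z, hcF z⟩ : ↥F) * X)).coeff 0 : ↥F) : E)
        = δ u := by
      rw [coeff_add, coeff_C, coeff_C_mul, coeff_X_zero, if_pos rfl]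
      push_cast
      simp
    have hdegq : q.natDegree ≤ 1 :=
      highdeg δ hFc M hMtr hδM hconstF x hxF hx q _ hDq hS2deg
        (by rw [hS2coeff1]; exact hc z)
    have hq2 : ((q.coeff 2 : E)) = 0 := by
      rw [coeff_eq_zero_of_natDegree_lt (lt_of_le_of_lt hdegq (by norm_num))]
      rfl
    have f1E := coeffE δ hFc M hδM q _ hDq 1
    rw [hq2, hS2coeff1] at f1E
    simp only [zero_mul, mul_zero, add_zero] at f1E
    have f0E := coeffE δ hFc M hδM q _ hDq 0
    rw [hS2coeff0] at f0E
    refine ⟨(q.coeff 1 : E), (q.coeff 0 : E), SetLike.coe_mem _, SetLike.coe_mem _,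
      ⟨z, f1E⟩, ?_⟩
    rw [← hM]
    push_cast at f0E
    linear_combination -f0E
  · -- converse direction
    intro r w hr hw z hδr
    have h1 : δ (c z * D + w + r * M)
        = c z * δ D + D * δ (c z) + δ w + (r * δ M + M * δ r) := by
      rw [map_add, map_add, Derivation.leibniz, Derivation.leibniz,
        smul_eq_mul, smul_eq_mul, smul_eq_mul, smul_eq_mul]
      try ring
    rw [h1, hc z, hδr, hδD, ← hM]
    try ring
end
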